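/- arXiv:1803.11465 — 5 statements merged into one kernel-verified Lean document; each statement's English description precedes it below -/
import Mathlib

section
/- Let p ∈ (0,1) with p ≠ 1/2, α > 0, and n ≥ 0 an even integer. Then p · ∏_{j=0}^{n} (pα + j) + (-1)^{n+1} (1-p) · ∏_{j=0}^{n} ((1-p)α + j) ≠ 0. -/
lemma stmt4_aux (α : ℝ) (hα : 0 < α) {p q : ℝ} (hp : 0 < p) (hpq : p < q) (n : ℕ) :
    p * ∏ j ∈ Finset.range (n + 1), (p * α + j) <
      q * ∏ j ∈ Finset.range (n + 1), (q * α + j) := by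
  have h1 : ∏ j ∈ Finset.range (n + 1), (p * α + (j : ℝ)) <
      ∏ j ∈ Finset.range (n + 1), (q * α + (j : ℝ)) :=
    Finset.prod_lt_prod_of_nonempty (fun j _ => by positivity)
      (fun j _ => by nlinarith) ⟨0, by simp⟩
  have h2 : 0 < ∏ j ∈ Finset.range (n + 1), (p * α + (j : ℝ)) :=
    Finset.prod_pos (fun j _ => by positivity)
  nlinarith

/-- For `p ∈ (0,1)`, `p ≠ 1/2`, `α > 0` and even `n ≥ 0`,
`p·∏_{j=0}^n (pα+j) + (-1)^{n+1} (1-p)·∏_{j=0}^n ((1-p)α+j) ≠ 0`. -/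
theorem stmt4 (p α : ℝ) (hp : p ∈ Set.Ioo (0 : ℝ) 1) (hp2 : p ≠ 1 / 2) (hα : 0 < α)
    (n : ℕ) (hn : Even n) :
    p * ∏ j ∈ Finset.range (n + 1), (p * α + j) +
      (-1 : ℝ) ^ (n + 1) * ((1 - p) * ∏ j ∈ Finset.range (n + 1), ((1 - p) * α + j)) ≠ 0 := by
  obtain ⟨hp0, hp1⟩ := hp
  have hodd : Odd (n + 1) := Even.add_one hn
  rw [hodd.neg_one_pow]
  rcases lt_or_gt_of_ne hp2 with h | h
  · have := stmt4_aux α hα hp0 (by linarith : p < 1 - p) n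
    intro hc; linarith
  · have := stmt4_aux α hα (by linarith : (0:ℝ) < 1 - p) (by linarith : 1 - p < p) n
    intro hc; linarith
end

section
/- Let α > 0, p ∈ (0,1), let Z ~ Be(pα, (1-p)α) and W ~ Be(1, α) be independent. Then for every bounded measurable g : [0,1] → ℝ (equivalently all measurable g ≥ 0), E[g(Z)·Z] = p · E[g((1-W)Z + W)]. -/
open MeasureTheory

/-- The Beta distribution `Be(a,b)` on `ℝ`: the measure with density
`x ↦ x^(a-1) (1-x)^(b-1) / B(a,b)` on `(0,1)` with respect to Lebesgue measure. -/
noncomputable def betaMeasure (a b : ℝ) : Measure ℝ :=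
  volume.withDensity fun x =>
    ENNReal.ofReal (Set.indicator (Set.Ioo 0 1)
      (fun t => Real.Gamma (a + b) / (Real.Gamma a * Real.Gamma b) *
        (t ^ (a - 1) * (1 - t) ^ (b - 1))) x)

open ProbabilityTheory
open scoped ENNReal NNReal

section auxLemmas

lemma ofReal_indicator' (s : Set ℝ) (f : ℝ → ℝ) (x : ℝ) :
    ENNReal.ofReal (s.indicator f x) = s.indicator (fun y => ENNReal.ofReal (f y)) x := by
  by_cases hx : x ∈ s <;> simp [hx]

lemma beta_expand (a b : ℝ) (f : ℝ → ℝ≥0∞) (hf : Measurable f) :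
    ∫⁻ x, f x ∂(_root_.betaMeasure a b)
      = ∫⁻ x in Set.Ioo 0 1,
          ENNReal.ofReal (Real.Gamma (a+b) / (Real.Gamma a * Real.Gamma b)
            * (x ^ (a-1) * (1-x) ^ (b-1))) * f x := by
  have hd : Measurable fun x : ℝ => ENNReal.ofReal ((Set.Ioo (0:ℝ) 1).indicator
      (fun t => Real.Gamma (a+b) / (Real.Gamma a * Real.Gamma b)
        * (t ^ (a-1) * (1-t) ^ (b-1))) x) := by
    apply Measurable.ennreal_ofReal
    refine Measurable.indicator ?_ measurableSet_Ioo
    exact (measurable_const.mul ((measurable_id.pow_const _).mul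
      ((measurable_const.sub measurable_id).pow_const _)))
  rw [_root_.betaMeasure, lintegral_withDensity_eq_lintegral_mul _ hd hf,
    ← lintegral_indicator measurableSet_Ioo]
  congr 1
  funext x
  simp only [Pi.mul_apply, ofReal_indicator']
  by_cases hx : x ∈ Set.Ioo (0:ℝ) 1 <;> simp [hx]

lemma lintegral_comp_affine (c d : ℝ) (hc : c ≠ 0) (h : ℝ → ℝ≥0∞) (hm : Measurable h) :
    ∫⁻ x, h (c * x + d) ∂volume = ENNReal.ofReal |c|⁻¹ * ∫⁻ u, h u ∂volume := by
  have h1 : ∫⁻ x, h (c * x + d) ∂(volume : Measure ℝ)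
      = ∫⁻ y, h (y + d) ∂(Measure.map (c * ·) volume) :=
    (lintegral_map (hm.comp (measurable_add_const d)) (measurable_const_mul c)).symm
  rw [h1, Real.map_volume_mul_left hc, lintegral_smul_measure,
    lintegral_add_right_eq_self (fun y => h y) d, abs_inv, smul_eq_mul]

lemma aux_J {a u : ℝ} (ha : 0 < a) (hu : 0 < u) :
    ∫⁻ w in Set.Ioo 0 u, ENNReal.ofReal ((u - w) ^ (a - 1)) = ENNReal.ofReal (u ^ a / a) := by
  have hmeas : Measurable fun t : ℝ => ENNReal.ofReal (t ^ (a - 1)) :=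
    (measurable_id.pow_const _).ennreal_ofReal
  set H : ℝ → ℝ≥0∞ := fun t => (Set.Ioo (0:ℝ) u).indicator
    (fun t => ENNReal.ofReal (t ^ (a - 1))) t with hH
  have hHmeas : Measurable H := hmeas.indicator measurableSet_Ioo
  have key : ∀ w : ℝ, (Set.Ioo (0:ℝ) u).indicator
      (fun w => ENNReal.ofReal ((u - w) ^ (a - 1))) w = H (-1 * w + u) := by
    intro w
    have hmem : -1 * w + u ∈ Set.Ioo (0:ℝ) u ↔ w ∈ Set.Ioo (0:ℝ) u := by
      simp only [Set.mem_Ioo]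
      constructor <;> rintro ⟨h1, h2⟩ <;> constructor <;> linarith
    by_cases hwm : w ∈ Set.Ioo (0:ℝ) u
    · rw [Set.indicator_of_mem hwm]
      have e : -1 * w + u = u - w := by ring
      rw [show H (-1 * w + u) = ENNReal.ofReal ((-1 * w + u) ^ (a - 1)) from
        Set.indicator_of_mem (hmem.mpr hwm) _, e]
    · rw [Set.indicator_of_notMem hwm]
      exact (Set.indicator_of_notMem (fun h => hwm (hmem.mp h)) _).symm
  have h2 : ∫⁻ w in Set.Ioo 0 u, ENNReal.ofReal ((u - w) ^ (a - 1))
      = ∫⁻ t in Set.Ioo 0 u, ENNReal.ofReal (t ^ (a - 1)) := by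
    rw [← lintegral_indicator measurableSet_Ioo]
    simp_rw [key]
    rw [lintegral_comp_affine (-1) u (by norm_num) H hHmeas]
    simp [hH, lintegral_indicator measurableSet_Ioo]
  rw [h2]
  have hint : IntegrableOn (fun t : ℝ => t ^ (a - 1)) (Set.Ioo 0 u) volume := by
    have := intervalIntegral.intervalIntegrable_rpow' (a := 0) (b := u) (r := a - 1)
      (by linarith)
    rw [intervalIntegrable_iff_integrableOn_Ioo_of_le hu.le] at this
    exact this
  rw [← ofReal_integral_eq_lintegral_ofReal hint
    ((ae_restrict_iff' measurableSet_Ioo).mpr (ae_of_all _ fun t ht =>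
      Real.rpow_nonneg ht.1.le _))]
  congr 1
  have h3 : ∫ t in Set.Ioo (0:ℝ) u, t ^ (a - 1)
      = ∫ t in (0:ℝ)..u, t ^ (a - 1) := by
    rw [intervalIntegral.integral_of_le hu.le, ← integral_Ioc_eq_integral_Ioo]
  rw [h3, integral_rpow (Or.inl (by linarith))]
  rw [Real.zero_rpow (by linarith : a - 1 + 1 ≠ 0)]
  ring_nf

lemma aux_swap (f : ℝ × ℝ → ℝ≥0∞) (hf : Measurable f) :
    ∫⁻ w in Set.Ioo (0:ℝ) 1, ∫⁻ u in Set.Ioo w 1, f (w, u)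
      = ∫⁻ u in Set.Ioo (0:ℝ) 1, ∫⁻ w in Set.Ioo 0 u, f (w, u) := by
  set S : Set (ℝ × ℝ) := {x | 0 < x.1} ∩ {x | x.1 < x.2} ∩ {x | x.2 < 1} with hS
  have hSm : MeasurableSet S :=
    ((measurableSet_lt measurable_const measurable_fst).inter
      (measurableSet_lt measurable_fst measurable_snd)).inter
      (measurableSet_lt measurable_snd measurable_const)
  have hSmem : ∀ x : ℝ × ℝ, x ∈ S ↔ 0 < x.1 ∧ x.1 < x.2 ∧ x.2 < 1 := by
    intro x; simp [hS]; tauto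
  set F : ℝ → ℝ → ℝ≥0∞ := fun w u => S.indicator f (w, u) with hF
  have hFm : Measurable (Function.uncurry F) := by
    have : Function.uncurry F = S.indicator f := by
      funext x; cases x; rfl
    rw [this]; exact hf.indicator hSm
  have hA : ∀ w : ℝ, ∫⁻ u, F w u
      = (Set.Ioo (0:ℝ) 1).indicator (fun w => ∫⁻ u in Set.Ioo w 1, f (w, u)) w := by
    intro w
    by_cases hw : w ∈ Set.Ioo (0:ℝ) 1
    · rw [Set.indicator_of_mem hw, ← lintegral_indicator measurableSet_Ioo]
      congr 1; funext u
      by_cases hu : u ∈ Set.Ioo w 1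
      · rw [Set.indicator_of_mem hu]
        exact Set.indicator_of_mem ((hSmem (w, u)).mpr ⟨hw.1, hu.1, hu.2⟩) _
      · rw [Set.indicator_of_notMem hu]
        exact Set.indicator_of_notMem
          (fun h => hu ⟨((hSmem (w, u)).mp h).2.1, ((hSmem (w, u)).mp h).2.2⟩) _
    · rw [Set.indicator_of_notMem hw]
      have : ∀ u, F w u = 0 := by
        intro u
        apply Set.indicator_of_notMem
        intro h
        obtain ⟨h1, h2, h3⟩ := (hSmem (w, u)).mp h
        simp only [Set.mem_Ioo, not_and_or, not_lt] at hw
        rcases hw with h' | h' <;> simp at h1 h2 h3 <;> linarith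
      simp [this]
  have hB : ∀ u : ℝ, ∫⁻ w, F w u
      = (Set.Ioo (0:ℝ) 1).indicator (fun u => ∫⁻ w in Set.Ioo 0 u, f (w, u)) u := by
    intro u
    by_cases hu : u ∈ Set.Ioo (0:ℝ) 1
    · rw [Set.indicator_of_mem hu, ← lintegral_indicator measurableSet_Ioo]
      congr 1; funext w
      by_cases hw : w ∈ Set.Ioo (0:ℝ) u
      · rw [Set.indicator_of_mem hw]
        exact Set.indicator_of_mem ((hSmem (w, u)).mpr ⟨hw.1, hw.2, hu.2⟩) _
      · rw [Set.indicator_of_notMem hw]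
        exact Set.indicator_of_notMem
          (fun h => hw ⟨((hSmem (w, u)).mp h).1, ((hSmem (w, u)).mp h).2.1⟩) _
    · rw [Set.indicator_of_notMem hu]
      have : ∀ w, F w u = 0 := by
        intro w
        apply Set.indicator_of_notMem
        intro h
        obtain ⟨h1, h2, h3⟩ := (hSmem (w, u)).mp h
        simp only [Set.mem_Ioo, not_and_or, not_lt] at hu
        rcases hu with h' | h' <;> simp at h1 h2 h3 <;> linarith
      simp [this]
  calc ∫⁻ w in Set.Ioo (0:ℝ) 1, ∫⁻ u in Set.Ioo w 1, f (w, u)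
      = ∫⁻ w, ∫⁻ u, F w u := by
        rw [← lintegral_indicator measurableSet_Ioo]
        congr 1; funext w; rw [hA w]
    _ = ∫⁻ u, ∫⁻ w, F w u := lintegral_lintegral_swap hFm.aemeasurable
    _ = ∫⁻ u in Set.Ioo (0:ℝ) 1, ∫⁻ w in Set.Ioo 0 u, f (w, u) := by
        rw [← lintegral_indicator measurableSet_Ioo]
        congr 1; funext u; rw [hB u]

lemma aux_sub {a b αr : ℝ} (C : ℝ) (hab : a + b = αr)
    (g : ℝ → ℝ≥0∞) (hg : Measurable g) (w : ℝ) (hw : w ∈ Set.Ioo (0:ℝ) 1) :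
    ∫⁻ z in Set.Ioo 0 1,
        ENNReal.ofReal (C * (z ^ (a-1) * (1-z) ^ (b-1))) * g ((1-w) * z + w)
      = ∫⁻ u in Set.Ioo w 1,
          ENNReal.ofReal ((1-w) ^ (1-αr) * C * ((u-w) ^ (a-1) * (1-u) ^ (b-1))) * g u := by
  have hc : 0 < 1 - w := by linarith [hw.2]
  set c := 1 - w with hc_def
  set H : ℝ → ℝ≥0∞ := fun u => (Set.Ioo w 1).indicator
    (fun u => ENNReal.ofReal (C * (((u-w)/c) ^ (a-1) * ((1-u)/c) ^ (b-1))) * g u) u with hH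
  have hHmeas : Measurable H := by
    apply Measurable.indicator _ measurableSet_Ioo
    exact (Measurable.ennreal_ofReal (measurable_const.mul
      ((((measurable_id.sub measurable_const).div measurable_const).pow_const _).mul
        (((measurable_const.sub measurable_id).div measurable_const).pow_const _)))).mul hg
  have key : ∀ z : ℝ, (Set.Ioo (0:ℝ) 1).indicator
      (fun z => ENNReal.ofReal (C * (z ^ (a-1) * (1-z) ^ (b-1))) * g (c * z + w)) z
        = H (c * z + w) := by
    intro z
    have hmem : c * z + w ∈ Set.Ioo w 1 ↔ z ∈ Set.Ioo (0:ℝ) 1 := by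
      simp only [Set.mem_Ioo]
      constructor <;> rintro ⟨h1, h2⟩ <;> constructor <;> nlinarith
    by_cases hz : z ∈ Set.Ioo (0:ℝ) 1
    · rw [Set.indicator_of_mem hz,
        show H (c * z + w) = ENNReal.ofReal
          (C * (((c * z + w - w)/c) ^ (a-1) * ((1 - (c * z + w))/c) ^ (b-1))) * g (c * z + w)
          from Set.indicator_of_mem (hmem.mpr hz) _]
      have e1 : (c * z + w - w)/c = z := by field_simp; ring
      have e2 : (1 - (c * z + w))/c = 1 - z := by
        rw [div_eq_iff hc.ne', hc_def]; ring
      rw [e1, e2]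
    · rw [Set.indicator_of_notMem hz]
      exact (Set.indicator_of_notMem (fun h => hz (hmem.mp h)) _).symm
  calc ∫⁻ z in Set.Ioo 0 1,
        ENNReal.ofReal (C * (z ^ (a-1) * (1-z) ^ (b-1))) * g (c * z + w)
      = ∫⁻ z, H (c * z + w) := by
        rw [← lintegral_indicator measurableSet_Ioo]
        congr 1; funext z; rw [← key z]
    _ = ENNReal.ofReal |c|⁻¹ * ∫⁻ u, H u :=
        lintegral_comp_affine c w hc.ne' H hHmeas
    _ = ENNReal.ofReal c⁻¹ * ∫⁻ u in Set.Ioo w 1,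
          ENNReal.ofReal (C * (((u-w)/c) ^ (a-1) * ((1-u)/c) ^ (b-1))) * g u := by
        rw [abs_of_pos hc, hH, lintegral_indicator measurableSet_Ioo]
    _ = ∫⁻ u in Set.Ioo w 1,
          ENNReal.ofReal (c ^ (1-αr) * C * ((u-w) ^ (a-1) * (1-u) ^ (b-1))) * g u := by
        rw [← lintegral_const_mul' _ _ ENNReal.ofReal_ne_top]
        apply setLIntegral_congr_fun measurableSet_Ioo
        intro u hu
        dsimp only
        rw [← mul_assoc, ← ENNReal.ofReal_mul (by positivity)]
        congr 2
        rw [Real.div_rpow (by linarith [hu.1] : (0:ℝ) ≤ u - w) hc.le,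
          Real.div_rpow (by linarith [hu.2] : (0:ℝ) ≤ 1 - u) hc.le]
        have hcc : c ^ (a-1) * c ^ (b-1) = c ^ (αr - 2) := by
          rw [← Real.rpow_add hc]; congr 1; linarith
        have hcc2 : c⁻¹ * (c ^ (αr-2))⁻¹ = c ^ (1-αr) := by
          rw [← Real.rpow_neg_one c, ← Real.rpow_neg hc.le, ← Real.rpow_add hc]
          congr 1; linarith
        calc c⁻¹ * (C * ((u-w) ^ (a-1) / c ^ (a-1) * ((1-u) ^ (b-1) / c ^ (b-1))))
            = (c⁻¹ * (c ^ (αr-2))⁻¹) * (C * ((u-w) ^ (a-1) * (1-u) ^ (b-1))) := by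
              rw [div_mul_div_comm, hcc]; ring
          _ = c ^ (1-αr) * C * ((u-w) ^ (a-1) * (1-u) ^ (b-1)) := by rw [hcc2]; ring

end auxLemmas

/-- If `Z ~ Be(pα, (1-p)α)` and `W ~ Be(1, α)` are independent, `p ∈ (0,1)`, `α > 0`,
then for every measurable `g ≥ 0`, `E[g(Z)·Z] = p·E[g((1-W)Z + W)]`. -/
theorem stmt10 {Ω : Type*} [MeasurableSpace Ω] (P : Measure Ω) [IsProbabilityMeasure P]
    (p α : ℝ) (hp : p ∈ Set.Ioo (0 : ℝ) 1) (hα : 0 < α)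
    (Z W : Ω → ℝ) (hZm : Measurable Z) (hWm : Measurable W) (hindep : IndepFun Z W P)
    (hZ : P.map Z = _root_.betaMeasure (p * α) ((1 - p) * α)) (hW : P.map W = _root_.betaMeasure 1 α)
    (g : ℝ → ℝ≥0∞) (hg : Measurable g) :
    ∫⁻ ω, g (Z ω) * ENNReal.ofReal (Z ω) ∂P
      = ENNReal.ofReal p * ∫⁻ ω, g ((1 - W ω) * Z ω + W ω) ∂P := by
  obtain ⟨hp0, hp1⟩ := hp
  set a := p * α with ha_def
  set b := (1 - p) * α with hb_def
  have ha : 0 < a := mul_pos hp0 hα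
  have hb : 0 < b := mul_pos (by linarith) hα
  have hab : a + b = α := by rw [ha_def, hb_def]; ring
  set C := Real.Gamma (a + b) / (Real.Gamma a * Real.Gamma b) with hC_def
  have hCpos : 0 < C := div_pos (Real.Gamma_pos_of_pos (by linarith))
    (mul_pos (Real.Gamma_pos_of_pos ha) (Real.Gamma_pos_of_pos hb))
  have hprobZ : IsProbabilityMeasure (_root_.betaMeasure a b) :=
    hZ ▸ Measure.isProbabilityMeasure_map hZm.aemeasurable
  have hprobW : IsProbabilityMeasure (_root_.betaMeasure 1 α) :=
    hW ▸ Measure.isProbabilityMeasure_map hWm.aemeasurable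
  -- LHS
  have hL : ∫⁻ ω, g (Z ω) * ENNReal.ofReal (Z ω) ∂P
      = ∫⁻ u in Set.Ioo 0 1,
          ENNReal.ofReal (C * (u ^ (a-1) * (1-u) ^ (b-1))) * (g u * ENNReal.ofReal u) := by
    calc ∫⁻ ω, g (Z ω) * ENNReal.ofReal (Z ω) ∂P
        = ∫⁻ z, g z * ENNReal.ofReal z ∂(P.map Z) :=
          (lintegral_map (hg.mul measurable_id.ennreal_ofReal) hZm).symm
      _ = _ := by rw [hZ]; exact beta_expand a b _ (hg.mul measurable_id.ennreal_ofReal)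
  -- RHS : reduce to product measure
  have hpair : P.map (fun ω => (Z ω, W ω)) = (P.map Z).prod (P.map W) :=
    (ProbabilityTheory.indepFun_iff_map_prod_eq_prod_map_map
      hZm.aemeasurable hWm.aemeasurable).mp hindep
  have hgm2 : Measurable fun x : ℝ × ℝ => g ((1 - x.2) * x.1 + x.2) :=
    hg.comp (((measurable_const.sub measurable_snd).mul measurable_fst).add measurable_snd)
  have hR1 : ∫⁻ ω, g ((1 - W ω) * Z ω + W ω) ∂P
      = ∫⁻ w, ∫⁻ z, g ((1 - w) * z + w) ∂(_root_.betaMeasure a b) ∂(_root_.betaMeasure 1 α) := by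
    calc ∫⁻ ω, g ((1 - W ω) * Z ω + W ω) ∂P
        = ∫⁻ x : ℝ × ℝ, g ((1 - x.2) * x.1 + x.2)
            ∂((_root_.betaMeasure a b).prod (_root_.betaMeasure 1 α)) := by
          rw [← hZ, ← hW, ← hpair]
          exact (lintegral_map hgm2 (hZm.prodMk hWm)).symm
      _ = _ := lintegral_prod_symm' _ hgm2
  -- inner measurability
  have hinner_meas : Measurable fun w : ℝ =>
      ∫⁻ z, g ((1 - w) * z + w) ∂(_root_.betaMeasure a b) := by
    apply Measurable.lintegral_prod_left' (f := fun x : ℝ × ℝ => g ((1 - x.2) * x.1 + x.2))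
    exact hgm2
  -- density of W simplification
  have hWd : ∀ w : ℝ, Real.Gamma (1 + α) / (Real.Gamma 1 * Real.Gamma α)
      * (w ^ ((1:ℝ)-1) * (1-w) ^ (α-1)) = α * (1-w) ^ (α-1) := by
    intro w
    rw [show (1:ℝ) + α = α + 1 by ring, Real.Gamma_add_one hα.ne', Real.Gamma_one,
      show (1:ℝ) - 1 = 0 by norm_num, Real.rpow_zero, one_mul]
    field_simp [(Real.Gamma_pos_of_pos hα).ne']
  -- full RHS computation
  have hdiv_meas : ∀ u : ℝ, Measurable fun w : ℝ => ENNReal.ofReal ((u - w) ^ (a-1)) :=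
    fun u => ((measurable_id.const_sub u).pow_const _).ennreal_ofReal
  have hR : ∫⁻ ω, g ((1 - W ω) * Z ω + W ω) ∂P
      = ∫⁻ u in Set.Ioo (0:ℝ) 1,
          ENNReal.ofReal (u ^ a / a) * (ENNReal.ofReal (α * C * (1-u) ^ (b-1)) * g u) := by
    rw [hR1, beta_expand 1 α _ hinner_meas]
    have step1 : ∫⁻ w in Set.Ioo (0:ℝ) 1,
        ENNReal.ofReal (Real.Gamma (1+α) / (Real.Gamma 1 * Real.Gamma α)
          * (w ^ ((1:ℝ)-1) * (1-w) ^ (α-1)))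
          * ∫⁻ z, g ((1 - w) * z + w) ∂(_root_.betaMeasure a b)
        = ∫⁻ w in Set.Ioo (0:ℝ) 1, ∫⁻ u in Set.Ioo w 1,
            ENNReal.ofReal (α * C * ((u-w) ^ (a-1) * (1-u) ^ (b-1))) * g u := by
      apply setLIntegral_congr_fun measurableSet_Ioo
      intro w hw
      have hcw : 0 < 1 - w := by
        have := hw.2
        simp only [Set.mem_Ioo] at hw
        linarith [hw.2]
      have hminner : Measurable fun z : ℝ => g ((1 - w) * z + w) := hg.comp (by fun_prop)
      calc ENNReal.ofReal (Real.Gamma (1+α) / (Real.Gamma 1 * Real.Gamma α)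
            * (w ^ ((1:ℝ)-1) * (1-w) ^ (α-1)))
            * ∫⁻ z, g ((1 - w) * z + w) ∂(_root_.betaMeasure a b)
          = ENNReal.ofReal (α * (1-w) ^ (α-1)) * ∫⁻ z in Set.Ioo 0 1,
              ENNReal.ofReal (C * (z ^ (a-1) * (1-z) ^ (b-1))) * g ((1 - w) * z + w) := by
            rw [hWd w]
            congr 1
            exact beta_expand a b (fun z => g ((1 - w) * z + w)) hminner
        _ = ENNReal.ofReal (α * (1-w) ^ (α-1)) * ∫⁻ u in Set.Ioo w 1,
              ENNReal.ofReal ((1-w) ^ (1-α) * C * ((u-w) ^ (a-1) * (1-u) ^ (b-1))) * g u := by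
            congr 1
            exact aux_sub C hab g hg w hw
        _ = ∫⁻ u in Set.Ioo w 1,
              ENNReal.ofReal (α * C * ((u-w) ^ (a-1) * (1-u) ^ (b-1))) * g u := by
            rw [← lintegral_const_mul' _ _ ENNReal.ofReal_ne_top]
            apply setLIntegral_congr_fun measurableSet_Ioo
            intro u hu
            dsimp only
            rw [← mul_assoc, ← ENNReal.ofReal_mul
              (mul_nonneg hα.le (Real.rpow_nonneg hcw.le _))]
            congr 2
            have hone : (1-w) ^ (α-1) * (1-w) ^ ((1:ℝ)-α) = 1 := by
              rw [← Real.rpow_add hcw]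
              norm_num
            calc α * (1-w) ^ (α-1) * ((1-w) ^ (1-α) * C * ((u-w) ^ (a-1) * (1-u) ^ (b-1)))
                = α * C * ((u-w) ^ (a-1) * (1-u) ^ (b-1))
                    * ((1-w) ^ (α-1) * (1-w) ^ ((1:ℝ)-α)) := by ring
              _ = α * C * ((u-w) ^ (a-1) * (1-u) ^ (b-1)) := by rw [hone, mul_one]
    rw [step1]
    have hf0 : Measurable fun x : ℝ × ℝ =>
        ENNReal.ofReal (α * C * ((x.2 - x.1) ^ (a-1) * (1 - x.2) ^ (b-1))) * g x.2 := by
      apply Measurable.mul _ (hg.comp measurable_snd)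
      apply Measurable.ennreal_ofReal
      exact measurable_const.mul (((measurable_snd.sub measurable_fst).pow_const _).mul
        ((measurable_const.sub measurable_snd).pow_const _))
    refine Eq.trans (aux_swap (fun x : ℝ × ℝ =>
      ENNReal.ofReal (α * C * ((x.2 - x.1) ^ (a-1) * (1 - x.2) ^ (b-1))) * g x.2) hf0) ?_
    apply setLIntegral_congr_fun measurableSet_Ioo
    intro u hu
    calc ∫⁻ w in Set.Ioo 0 u, (fun x : ℝ × ℝ =>
          ENNReal.ofReal (α * C * ((x.2 - x.1) ^ (a-1) * (1 - x.2) ^ (b-1))) * g x.2) (w, u)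
        = ∫⁻ w in Set.Ioo 0 u, ENNReal.ofReal ((u - w) ^ (a-1))
            * (ENNReal.ofReal (α * C * (1-u) ^ (b-1)) * g u) := by
          apply setLIntegral_congr_fun measurableSet_Ioo
          intro w hw
          show ENNReal.ofReal (α * C * ((u - w) ^ (a-1) * (1-u) ^ (b-1))) * g u = _
          dsimp only
          rw [← mul_assoc (ENNReal.ofReal ((u - w) ^ (a-1))), ← ENNReal.ofReal_mul
            (Real.rpow_nonneg (by linarith [hw.2] : (0:ℝ) ≤ u - w) _)]
          congr 2
          ring
      _ = (∫⁻ w in Set.Ioo 0 u, ENNReal.ofReal ((u - w) ^ (a-1)))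
            * (ENNReal.ofReal (α * C * (1-u) ^ (b-1)) * g u) :=
          lintegral_mul_const _ (hdiv_meas u)
      _ = ENNReal.ofReal (u ^ a / a) * (ENNReal.ofReal (α * C * (1-u) ^ (b-1)) * g u) := by
          rw [aux_J ha hu.1]
  -- combine
  rw [hL, hR, ← lintegral_const_mul' _ _ ENNReal.ofReal_ne_top]
  apply setLIntegral_congr_fun measurableSet_Ioo
  intro u hu
  have hu1 : (0:ℝ) ≤ 1 - u := by linarith [hu.2]
  have hX : (0:ℝ) ≤ u ^ (a-1) * (1-u) ^ (b-1) :=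
    mul_nonneg (Real.rpow_nonneg hu.1.le _) (Real.rpow_nonneg hu1 _)
  have hdiv : (0:ℝ) ≤ u ^ a / a := div_nonneg (Real.rpow_nonneg hu.1.le _) ha.le
  have hua : u ^ a = u ^ (a-1) * u := by
    rw [← Real.rpow_add_one hu.1.ne' (a-1)]
    norm_num
  calc ENNReal.ofReal (C * (u ^ (a-1) * (1-u) ^ (b-1))) * (g u * ENNReal.ofReal u)
      = ENNReal.ofReal (C * (u ^ (a-1) * (1-u) ^ (b-1)) * u) * g u := by
        rw [ENNReal.ofReal_mul (mul_nonneg hCpos.le hX)]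
        ring
    _ = ENNReal.ofReal (p * (u ^ a / a) * (α * C * (1-u) ^ (b-1))) * g u := by
        congr 1
        apply congrArg
        have hpa : p * α = a := ha_def.symm
        calc C * (u ^ (a-1) * (1-u) ^ (b-1)) * u
            = (p * α / a) * (C * (u ^ (a-1) * (1-u) ^ (b-1)) * u) := by
              rw [hpa, div_self ha.ne']
              ring
          _ = p * (u ^ a / a) * (α * C * (1-u) ^ (b-1)) := by
              rw [hua]
              ring
    _ = ENNReal.ofReal p * (ENNReal.ofReal (u ^ a / a)
          * (ENNReal.ofReal (α * C * (1-u) ^ (b-1)) * g u)) := by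
        rw [ENNReal.ofReal_mul (mul_nonneg hp0.le hdiv), ENNReal.ofReal_mul hp0.le]
        ring
end

section
/- Let Z and W be independent [0,1]-valued random variables, p ∈ (0,1), α := (1-E[W])/E[W] with E[W] ∈ (0,1), and suppose E[g(Z)Z] = p·E[g((1-W)Z + W)] for all measurable g ≥ 0 and E[g(Z)Z²] = c·E[g((1-W)Z + W)·W] for all measurable g ≥ 0 and some c ≥ 0. Then c = p(αp + 1). -/
open MeasureTheory

open ProbabilityTheory
open scoped ENNReal NNReal

/-- If `Z, W` are independent `[0,1]`-valued random variables with `E[W] ∈ (0,1)`,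
`p ∈ (0,1)`, `α := (1-E[W])/E[W]`, and for all measurable `g ≥ 0`:
`E[g(Z)Z] = p·E[g((1-W)Z+W)]` and `E[g(Z)Z²] = c·E[g((1-W)Z+W)·W]` with `c ≥ 0`,
then `c = p(αp + 1)`. -/
theorem stmt13 {Ω : Type*} [MeasurableSpace Ω] (P : Measure Ω) [IsProbabilityMeasure P]
    (Z W : Ω → ℝ) (hZm : Measurable Z) (hWm : Measurable W)
    (hZ01 : ∀ ω, Z ω ∈ Set.Icc (0 : ℝ) 1) (hW01 : ∀ ω, W ω ∈ Set.Icc (0 : ℝ) 1)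
    (hindep : IndepFun Z W P)
    (hEW : ∫ ω, W ω ∂P ∈ Set.Ioo (0 : ℝ) 1)
    (p c α : ℝ) (hp : p ∈ Set.Ioo (0 : ℝ) 1) (hc : 0 ≤ c)
    (hαdef : α = (1 - ∫ ω, W ω ∂P) / ∫ ω, W ω ∂P)
    (heq1 : ∀ g : ℝ → ℝ≥0∞, Measurable g →
      ∫⁻ ω, g (Z ω) * ENNReal.ofReal (Z ω) ∂P
        = ENNReal.ofReal p * ∫⁻ ω, g ((1 - W ω) * Z ω + W ω) ∂P)
    (heq2 : ∀ g : ℝ → ℝ≥0∞, Measurable g →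
      ∫⁻ ω, g (Z ω) * ENNReal.ofReal (Z ω) ^ 2 ∂P
        = ENNReal.ofReal c * ∫⁻ ω, g ((1 - W ω) * Z ω + W ω) * ENNReal.ofReal (W ω) ∂P) :
    c = p * (α * p + 1) := by
  obtain ⟨hm0, hm1⟩ := hEW
  set m := ∫ ω, W ω ∂P with hm
  -- integrability of bounded measurable functions
  have hbd : ∀ f : Ω → ℝ, Measurable f → (∀ ω, |f ω| ≤ 1) → Integrable f P := by
    intro f hf hb
    exact (integrable_const (1:ℝ)).mono' hf.aestronglyMeasurable (Filter.Eventually.of_forall hb)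
  have hZb : ∀ ω, |Z ω| ≤ 1 := fun ω => abs_le.2 ⟨by linarith [(hZ01 ω).1], (hZ01 ω).2⟩
  have hWb : ∀ ω, |W ω| ≤ 1 := fun ω => abs_le.2 ⟨by linarith [(hW01 ω).1], (hW01 ω).2⟩
  have hZint : Integrable Z P := hbd Z hZm hZb
  have hWint : Integrable W P := hbd W hWm hWb
  have hZsq : Integrable (fun ω => Z ω * Z ω) P := by
    refine hbd _ (hZm.mul hZm) fun ω => ?_
    rw [abs_mul]
    exact mul_le_one₀ (hZb ω) (abs_nonneg _) (hZb ω)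
  have hfb : ∀ ω, (0:ℝ) ≤ (1 - W ω) * Z ω + W ω ∧ (1 - W ω) * Z ω + W ω ≤ 1 := by
    intro ω
    obtain ⟨hz0, hz1⟩ := hZ01 ω
    obtain ⟨hw0, hw1⟩ := hW01 ω
    constructor
    · have : (0:ℝ) ≤ (1 - W ω) * Z ω := mul_nonneg (by linarith) hz0
      linarith
    · nlinarith
  have hfm : Measurable fun ω => (1 - W ω) * Z ω + W ω :=
    (((measurable_const.sub hWm).mul hZm).add hWm)
  have hfint : Integrable (fun ω => (1 - W ω) * Z ω + W ω) P :=
    hbd _ hfm fun ω => abs_le.2 ⟨by linarith [(hfb ω).1], (hfb ω).2⟩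
  have h1Wint : Integrable (fun ω => (1 - W ω) * Z ω) P := hfint.sub hWint |>.congr (by
    filter_upwards with ω; simp only [Pi.sub_apply]; ring)
  -- Step A : E[Z] = p
  have hA := heq1 (fun _ => 1) measurable_const
  simp only [one_mul, lintegral_one, measure_univ, mul_one] at hA
  have hAZ : ENNReal.ofReal (∫ ω, Z ω ∂P) = ∫⁻ ω, ENNReal.ofReal (Z ω) ∂P :=
    ofReal_integral_eq_lintegral_ofReal hZint (Filter.Eventually.of_forall fun ω => (hZ01 ω).1)
  have hEZ : ∫ ω, Z ω ∂P = p := by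
    have := hAZ.trans hA
    rwa [ENNReal.ofReal_eq_ofReal_iff (integral_nonneg fun ω => (hZ01 ω).1) hp.1.le] at this
  -- Step B : E[Z²] = p * ((1-m)p + m)
  have hB := heq1 ENNReal.ofReal ENNReal.measurable_ofReal
  have hBL : ∫⁻ ω, ENNReal.ofReal (Z ω) * ENNReal.ofReal (Z ω) ∂P
      = ENNReal.ofReal (∫ ω, Z ω * Z ω ∂P) := by
    rw [ofReal_integral_eq_lintegral_ofReal hZsq
      (Filter.Eventually.of_forall fun ω => mul_nonneg (hZ01 ω).1 (hZ01 ω).1)]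
    congr 1
    ext ω
    rw [ENNReal.ofReal_mul (hZ01 ω).1]
  have hBR : ∫⁻ ω, ENNReal.ofReal ((1 - W ω) * Z ω + W ω) ∂P
      = ENNReal.ofReal (∫ ω, ((1 - W ω) * Z ω + W ω) ∂P) :=
    (ofReal_integral_eq_lintegral_ofReal hfint
      (Filter.Eventually.of_forall fun ω => (hfb ω).1)).symm
  have hindep' : IndepFun (fun ω => 1 - W ω) Z P := by
    have := hindep.symm.comp (φ := fun x : ℝ => 1 - x) (ψ := id)
      (measurable_const.sub measurable_id) measurable_id
    exact this
  have hmulint : ∫ ω, (1 - W ω) * Z ω ∂P = (1 - m) * p := by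
    have := hindep'.integral_mul_eq_mul_integral ((integrable_const (1:ℝ)).sub hWint).aestronglyMeasurable
      hZint.aestronglyMeasurable
    rw [show ((fun ω => 1 - W ω) * Z) = fun ω => (1 - W ω) * Z ω from rfl] at this
    rw [this, integral_sub (integrable_const (1:ℝ)) hWint, hEZ]
    simp [hm]
  have hEf : ∫ ω, ((1 - W ω) * Z ω + W ω) ∂P = (1 - m) * p + m := by
    rw [integral_add h1Wint hWint, hmulint]
  have hB' : ENNReal.ofReal (∫ ω, Z ω * Z ω ∂P)
      = ENNReal.ofReal (p * ((1 - m) * p + m)) := by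
    rw [← hBL, hB, hBR, hEf, ← ENNReal.ofReal_mul hp.1.le]
  -- Step C : E[Z²] = c * m
  have hC := heq2 (fun _ => 1) measurable_const
  simp only [one_mul] at hC
  have hCL : ∫⁻ ω, ENNReal.ofReal (Z ω) ^ 2 ∂P
      = ENNReal.ofReal (∫ ω, Z ω * Z ω ∂P) := by
    rw [← hBL]
    congr 1; ext ω; ring
  have hCR : ∫⁻ ω, ENNReal.ofReal (W ω) ∂P = ENNReal.ofReal m :=
    (ofReal_integral_eq_lintegral_ofReal hWint
      (Filter.Eventually.of_forall fun ω => (hW01 ω).1)).symm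
  have hC' : ENNReal.ofReal (∫ ω, Z ω * Z ω ∂P) = ENNReal.ofReal (c * m) := by
    rw [← hCL, hC, hCR, ← ENNReal.ofReal_mul hc]
  -- combine
  have hkey : p * ((1 - m) * p + m) = c * m := by
    have := hB'.symm.trans hC'
    rw [ENNReal.ofReal_eq_ofReal_iff
      (mul_nonneg hp.1.le (by nlinarith [hp.1, hp.2])) (mul_nonneg hc hm0.le)] at this
    exact this
  rw [hαdef]
  field_simp
  nlinarith [hkey]
end

section
/- Let Z be a [0,1]-valued random variable. Suppose there exists an independent [0,1]-valued random variable W with E[W] ∈ (0,1), and numbers p ∈ (0,1), c ≥ 0, such that for all measurable g : [0,1] → [0,∞): E[g(Z)Z] = p·E[g((1-W)Z+W)] and E[g(Z)Z²] = c·E[g((1-W)Z+W)·W]. Then, with α := (1-E[W])/E[W], Z ~ Be(pα, (1-p)α), W ~ Be(1,α), and c = p(αp+1). -/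
open MeasureTheory

open ProbabilityTheory
open scoped ENNReal NNReal

open Finset

/-- rising factorial -/
noncomputable def rr (x : ℝ) (n : ℕ) : ℝ := ∏ i ∈ Finset.range n, (x + i)

lemma rr_zero (x : ℝ) : rr x 0 = 1 := by simp [rr]

lemma rr_succ (x : ℝ) (n : ℕ) : rr x (n+1) = rr x n * (x + n) := by
  simp [rr, Finset.prod_range_succ]

lemma rr_pos {x : ℝ} (hx : 0 < x) (n : ℕ) : 0 < rr x n := by
  induction n with
  | zero => simp [rr_zero]
  | succ n ih => rw [rr_succ]; positivity

lemma rr_succ' (x : ℝ) (n : ℕ) : rr x (n+1) = x * rr (x+1) n := by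
  induction n with
  | zero => simp [rr_succ, rr_zero]
  | succ n ih =>
    rw [rr_succ, ih, rr_succ]
    push_cast; ring

lemma hockey1 (a : ℝ) (n : ℕ) :
    ∑ j ∈ Finset.range (n+1), rr a j / (j.factorial : ℝ) = rr (a+1) n / (n.factorial : ℝ) := by
  induction n with
  | zero => simp [rr_zero]
  | succ n ih =>
    rw [Finset.sum_range_succ, ih]
    have e1 : rr (a+1) (n+1) = rr (a+1) n * (a+1+n) := rr_succ _ _
    have e2 : rr a (n+1) = a * rr (a+1) n := rr_succ' _ _
    rw [e1, e2]
    have h1 : ((n+1).factorial : ℝ) = (n.factorial : ℝ) * (n+1) := by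
      rw [Nat.factorial_succ]; push_cast; ring
    have h2 : (n.factorial : ℝ) ≠ 0 := Nat.cast_ne_zero.2 n.factorial_ne_zero
    have h3 : ((n:ℝ)+1) ≠ 0 := by positivity
    rw [h1]
    field_simp
    ring

lemma hockey2 (a : ℝ) (n : ℕ) :
    ∑ j ∈ Finset.range (n+1), ((n:ℝ) + 1 - j) * rr a j / (j.factorial : ℝ)
      = rr (a+2) n / (n.factorial : ℝ) := by
  induction n with
  | zero => simp [rr_zero]
  | succ n ih =>
    have key : ∀ j ∈ Finset.range (n+1+1), ((n:ℝ) + 1 + 1 - j) * rr a j / (j.factorial : ℝ)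
        = ((n:ℝ) + 1 - j) * rr a j / (j.factorial : ℝ) + rr a j / (j.factorial : ℝ) := by
      intro j _; ring
    push_cast
    rw [Finset.sum_congr rfl key, Finset.sum_add_distrib, hockey1,
      Finset.sum_range_succ, ih]
    have hz : ((n:ℝ) + 1 - ((n+1 : ℕ) : ℝ)) = 0 := by push_cast; ring
    rw [hz, zero_mul, zero_div, add_zero]
    have h1 : ((n+1).factorial : ℝ) = (n.factorial : ℝ) * (n+1) := by
      rw [Nat.factorial_succ]; push_cast; ring
    have h2 : (n.factorial : ℝ) ≠ 0 := Nat.cast_ne_zero.2 n.factorial_ne_zero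
    have h3 : ((n:ℝ)+1) ≠ 0 := by positivity
    have e1 : rr (a+2) (n+1) = rr (a+2) n * (a+2+n) := rr_succ _ _
    have e2 : rr (a+1) (n+1) = (a+1) * rr (a+2) n := by
      rw [rr_succ']; norm_num [add_assoc]
    rw [e1, e2, h1]
    field_simp
    ring

lemma Gamma_rr {x : ℝ} (hx : 0 < x) (n : ℕ) :
    Real.Gamma (x + n) = rr x n * Real.Gamma x := by
  induction n with
  | zero => simp [rr_zero]
  | succ n ih =>
    have : x + ((n:ℝ)+1) = (x + n) + 1 := by ring
    push_cast
    rw [this, Real.Gamma_add_one (by positivity), ih, rr_succ]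
    ring

section MomentExt

variable {μ : Measure ℝ} [IsProbabilityMeasure μ]

lemma integrable_of_cont (hμ : ∀ᵐ x ∂μ, x ∈ Set.Icc (0:ℝ) 1)
    (f : ℝ → ℝ) (hf : Continuous f) : Integrable f μ := by
  obtain ⟨C, hC⟩ : ∃ C, ∀ x ∈ Set.Icc (0:ℝ) 1, ‖f x‖ ≤ C :=
    isCompact_Icc.exists_bound_of_continuousOn hf.continuousOn
  exact (integrable_const C).mono' hf.aestronglyMeasurable
    (hμ.mono fun x hx => hC x hx)

lemma integral_poly_eq {ν : Measure ℝ} [IsProbabilityMeasure ν]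
    (hμ : ∀ᵐ x ∂μ, x ∈ Set.Icc (0:ℝ) 1) (hν : ∀ᵐ x ∂ν, x ∈ Set.Icc (0:ℝ) 1)
    (h : ∀ n : ℕ, ∫ x, x^n ∂μ = ∫ x, x^n ∂ν) (q : Polynomial ℝ) :
    ∫ x, q.eval x ∂μ = ∫ x, q.eval x ∂ν := by
  have hint : ∀ (ρ : Measure ℝ), (∀ᵐ x ∂ρ, x ∈ Set.Icc (0:ℝ) 1) → IsProbabilityMeasure ρ →
      ∀ i : ℕ, Integrable (fun x : ℝ => q.coeff i * x ^ i) ρ := by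
    intro ρ hρ _ i
    exact (integrable_of_cont hρ _ (continuous_pow i)).const_mul _
  have e1 : ∀ (ρ : Measure ℝ), (∀ᵐ x ∂ρ, x ∈ Set.Icc (0:ℝ) 1) → IsProbabilityMeasure ρ →
      ∫ x, q.eval x ∂ρ
        = ∑ i ∈ Finset.range (q.natDegree + 1), q.coeff i * ∫ x, x ^ i ∂ρ := by
    intro ρ hρ hρ2
    have : ∀ x : ℝ, q.eval x = ∑ i ∈ Finset.range (q.natDegree + 1), q.coeff i * x ^ i :=
      fun x => q.eval_eq_sum_range x
    rw [show (fun x : ℝ => q.eval x) = fun x =>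
        ∑ i ∈ Finset.range (q.natDegree + 1), q.coeff i * x ^ i from funext this]
    rw [integral_finset_sum _ (fun i _ => hint ρ hρ hρ2 i)]
    exact Finset.sum_congr rfl fun i _ => integral_const_mul _ _
  rw [e1 μ hμ ‹_›, e1 ν hν ‹_›]
  exact Finset.sum_congr rfl fun i _ => by rw [h i]

lemma integral_cont_eq {ν : Measure ℝ} [IsProbabilityMeasure ν]
    (hμ : ∀ᵐ x ∂μ, x ∈ Set.Icc (0:ℝ) 1) (hν : ∀ᵐ x ∂ν, x ∈ Set.Icc (0:ℝ) 1)
    (h : ∀ n : ℕ, ∫ x, x^n ∂μ = ∫ x, x^n ∂ν) (f : ℝ → ℝ) (hf : Continuous f) :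
    ∫ x, f x ∂μ = ∫ x, f x ∂ν := by
  have key : ∀ ε > (0:ℝ), |(∫ x, f x ∂μ) - ∫ x, f x ∂ν| ≤ 2 * ε := by
    intro ε hε
    -- Stone-Weierstrass approximation
    set F : C(Set.Icc (0:ℝ) 1, ℝ) := ContinuousMap.restrict _ ⟨f, hf⟩ with hF
    have hmem : F ∈ closure (polynomialFunctions (Set.Icc (0:ℝ) 1) : Set C(Set.Icc (0:ℝ) 1, ℝ)) := by
      have := polynomialFunctions_closure_eq_top 0 1
      rw [← Subalgebra.topologicalClosure_coe, this]
      simp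
    rw [Metric.mem_closure_iff] at hmem
    obtain ⟨g, hg, hdist⟩ := hmem ε hε
    rw [SetLike.mem_coe, ← SetLike.mem_coe, polynomialFunctions_coe] at hg
    obtain ⟨q, hq⟩ := hg
    have hqg : ∀ x : Set.Icc (0:ℝ) 1, g x = q.eval (x : ℝ) := by
      intro x; rw [← hq]; rfl
    have hbound : ∀ x ∈ Set.Icc (0:ℝ) 1, ‖f x - q.eval x‖ ≤ ε := by
      intro x hx
      have := ContinuousMap.dist_apply_le_dist (f := F) (g := g) ⟨x, hx⟩
      rw [hqg] at this
      have hFx : F ⟨x, hx⟩ = f x := rfl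
      rw [hFx] at this
      calc ‖f x - q.eval x‖ = dist (f x) (q.eval x) := by rw [Real.dist_eq]; rfl
        _ ≤ dist F g := this
        _ ≤ ε := le_of_lt hdist
    have hdiff : ∀ (ρ : Measure ℝ), (∀ᵐ x ∂ρ, x ∈ Set.Icc (0:ℝ) 1) → IsProbabilityMeasure ρ →
        |(∫ x, f x ∂ρ) - ∫ x, q.eval x ∂ρ| ≤ ε := by
      intro ρ hρ hρ2
      rw [← integral_sub (integrable_of_cont hρ f hf)
        (integrable_of_cont hρ _ (Polynomial.continuous q))]
      have := norm_integral_le_of_norm_le_const (μ := ρ)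
        (f := fun x => f x - q.eval x) (C := ε) (hρ.mono fun x hx => hbound x hx)
      simpa [measure_univ] using this
    have h2 := integral_poly_eq hμ hν h q
    have d1 := hdiff μ hμ ‹_›
    have d2 := hdiff ν hν ‹_›
    calc |(∫ x, f x ∂μ) - ∫ x, f x ∂ν|
        = |((∫ x, f x ∂μ) - ∫ x, q.eval x ∂μ)
            - ((∫ x, f x ∂ν) - ∫ x, q.eval x ∂ν)| := by rw [h2]; ring_nf
      _ ≤ |(∫ x, f x ∂μ) - ∫ x, q.eval x ∂μ| + |(∫ x, f x ∂ν) - ∫ x, q.eval x ∂ν| :=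
          abs_sub _ _
      _ ≤ 2 * ε := by linarith
  have : |(∫ x, f x ∂μ) - ∫ x, f x ∂ν| ≤ 0 := by
    by_contra hlt
    push_neg at hlt
    have := key (|(∫ x, f x ∂μ) - ∫ x, f x ∂ν| / 3) (by linarith)
    linarith
  have := abs_nonneg ((∫ x, f x ∂μ) - ∫ x, f x ∂ν)
  have : |(∫ x, f x ∂μ) - ∫ x, f x ∂ν| = 0 := le_antisymm ‹_› ‹_›
  linarith [abs_eq_zero.mp this, sub_eq_zero.mp (abs_eq_zero.mp this)]

lemma ext_of_moments (μ ν : Measure ℝ) [IsProbabilityMeasure μ] [IsProbabilityMeasure ν]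
    (hμ : ∀ᵐ x ∂μ, x ∈ Set.Icc (0:ℝ) 1) (hν : ∀ᵐ x ∂ν, x ∈ Set.Icc (0:ℝ) 1)
    (h : ∀ n : ℕ, ∫ x, x^n ∂μ = ∫ x, x^n ∂ν) : μ = ν := by
  apply ext_of_forall_lintegral_eq_of_IsFiniteMeasure
  intro f
  have hc : Continuous fun x : ℝ => (f x : ℝ) := NNReal.continuous_coe.comp f.continuous
  rw [lintegral_coe_eq_integral _ (integrable_of_cont hμ _ hc),
    lintegral_coe_eq_integral _ (integrable_of_cont hν _ hc),
    integral_cont_eq hμ hν h _ hc]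

end MomentExt

section BetaInt

variable {a b : ℝ}

lemma beta_cplx_eq (ha : 0 < a) (hb : 0 < b) :
    Complex.betaIntegral (a : ℂ) (b : ℂ)
      = ((∫ x in (0:ℝ)..1, x ^ (a-1) * (1-x) ^ (b-1) : ℝ) : ℂ) := by
  rw [Complex.betaIntegral, ← intervalIntegral.integral_ofReal]
  apply intervalIntegral.integral_congr
  intro x hx
  rw [Set.uIcc_of_le (by norm_num : (0:ℝ) ≤ 1)] at hx
  have hx0 : (0:ℝ) ≤ x := hx.1
  have hx1 : (0:ℝ) ≤ 1 - x := by linarith [hx.2]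
  dsimp only
  rw [show ((a:ℂ)-1) = ((a-1 : ℝ) : ℂ) by push_cast; ring,
    show ((b:ℂ)-1) = ((b-1 : ℝ) : ℂ) by push_cast; ring,
    show (1 - (x:ℂ)) = (((1-x : ℝ)) : ℂ) by push_cast; ring,
    ← Complex.ofReal_cpow hx0, ← Complex.ofReal_cpow hx1]
  push_cast
  ring

lemma beta_real_intervalIntegral (ha : 0 < a) (hb : 0 < b) :
    ∫ x in (0:ℝ)..1, x ^ (a-1) * (1-x) ^ (b-1)
      = Real.Gamma a * Real.Gamma b / Real.Gamma (a+b) := by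
  have h := Complex.Gamma_mul_Gamma_eq_betaIntegral
    (s := (a:ℂ)) (t := (b:ℂ)) (by simpa using ha) (by simpa using hb)
  rw [beta_cplx_eq ha hb] at h
  have hab : Real.Gamma (a+b) ≠ 0 := (Real.Gamma_pos_of_pos (by linarith)).ne'
  have h2 : ((Real.Gamma a * Real.Gamma b : ℝ) : ℂ)
      = ((Real.Gamma (a+b) * ∫ x in (0:ℝ)..1, x ^ (a-1) * (1-x) ^ (b-1) : ℝ) : ℂ) := by
    push_cast
    rw [← Complex.Gamma_ofReal, ← Complex.Gamma_ofReal, ← Complex.Gamma_ofReal] at *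
    push_cast at h ⊢
    convert h using 2
  have h3 := Complex.ofReal_injective h2
  field_simp
  linarith [h3]

lemma beta_integrableOn (ha : 0 < a) (hb : 0 < b) :
    IntegrableOn (fun x : ℝ => x ^ (a-1) * (1-x) ^ (b-1)) (Set.Ioc 0 1) volume := by
  have hc := Complex.betaIntegral_convergent (u := (a:ℂ)) (v := (b:ℂ))
    (by simpa using ha) (by simpa using hb)
  rw [intervalIntegrable_iff_integrableOn_Ioc_of_le (by norm_num : (0:ℝ) ≤ 1)] at hc
  have hre := hc.re
  apply hre.congr
  rw [Filter.eventuallyEq_comm, Filter.EventuallyEq, ae_restrict_iff' measurableSet_Ioc]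
  filter_upwards with x hx
  have hx0 : (0:ℝ) ≤ x := le_of_lt hx.1
  have hx1 : (0:ℝ) ≤ 1 - x := by linarith [hx.2]
  have e1 : ((x:ℂ) ^ ((a:ℂ)-1)) = ((x ^ (a-1) : ℝ) : ℂ) := by
    rw [Complex.ofReal_cpow hx0]; push_cast; ring_nf
  have e2 : ((1 - (x:ℂ)) ^ ((b:ℂ)-1)) = (((1-x) ^ (b-1) : ℝ) : ℂ) := by
    rw [Complex.ofReal_cpow hx1]; push_cast; ring_nf
  simp only [e1, e2, ← Complex.ofReal_mul]
  simp

lemma beta_lintegral (ha : 0 < a) (hb : 0 < b) :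
    ∫⁻ x in Set.Ioo (0:ℝ) 1, ENNReal.ofReal (x ^ (a-1) * (1-x) ^ (b-1))
      = ENNReal.ofReal (Real.Gamma a * Real.Gamma b / Real.Gamma (a+b)) := by
  have hint : IntegrableOn (fun x : ℝ => x ^ (a-1) * (1-x) ^ (b-1)) (Set.Ioo 0 1) volume :=
    (beta_integrableOn ha hb).mono_set Set.Ioo_subset_Ioc_self
  have hnn : 0 ≤ᵐ[volume.restrict (Set.Ioo (0:ℝ) 1)]
      fun x : ℝ => x ^ (a-1) * (1-x) ^ (b-1) := by
    rw [Filter.EventuallyLE, ae_restrict_iff' measurableSet_Ioo]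
    filter_upwards with x hx
    have : (0:ℝ) ≤ x := le_of_lt hx.1
    have : (0:ℝ) ≤ 1 - x := by linarith [hx.2]
    positivity
  rw [← ofReal_integral_eq_lintegral_ofReal hint hnn]
  congr 1
  rw [← MeasureTheory.integral_Ioc_eq_integral_Ioo,
    ← intervalIntegral.integral_of_le (by norm_num : (0:ℝ) ≤ 1)]
  exact beta_real_intervalIntegral ha hb

end BetaInt


section BetaMeas

variable {a b : ℝ}

lemma betaDensity_measurable (a b : ℝ) : Measurable (fun x : ℝ =>
    ENNReal.ofReal (Set.indicator (Set.Ioo 0 1)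
      (fun t => Real.Gamma (a + b) / (Real.Gamma a * Real.Gamma b) *
        (t ^ (a - 1) * (1 - t) ^ (b - 1))) x)) := by
  apply ENNReal.measurable_ofReal.comp
  apply Measurable.indicator _ measurableSet_Ioo
  fun_prop

lemma beta_lintegral_eq (a b : ℝ) (f : ℝ → ℝ≥0∞) (hf : Measurable f) :
    ∫⁻ x, f x ∂_root_.betaMeasure a b
      = ∫⁻ x in Set.Ioo (0:ℝ) 1, f x * ENNReal.ofReal
          (Real.Gamma (a + b) / (Real.Gamma a * Real.Gamma b)
            * (x ^ (a - 1) * (1 - x) ^ (b - 1))) := by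
  rw [_root_.betaMeasure, lintegral_withDensity_eq_lintegral_mul _ (betaDensity_measurable a b) hf]
  rw [← lintegral_indicator measurableSet_Ioo]
  congr 1
  funext x
  by_cases hx : x ∈ Set.Ioo (0:ℝ) 1
  · simp [hx, Set.indicator_of_mem, mul_comm]
  · simp [hx, Set.indicator_of_notMem]

lemma beta_lintegral_mix (ha : 0 < a) (hb : 0 < b) (j k : ℕ) :
    ∫⁻ x, ENNReal.ofReal (x ^ j * (1-x) ^ k) ∂_root_.betaMeasure a b
      = ENNReal.ofReal (rr a j * rr b k / rr (a+b) (j+k)) := by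
  rw [beta_lintegral_eq a b _ (by fun_prop)]
  have hC : 0 ≤ Real.Gamma (a + b) / (Real.Gamma a * Real.Gamma b) := by
    have := Real.Gamma_pos_of_pos ha
    have := Real.Gamma_pos_of_pos hb
    have := Real.Gamma_pos_of_pos (show 0 < a + b by linarith)
    positivity
  have key : ∀ x ∈ Set.Ioo (0:ℝ) 1,
      ENNReal.ofReal (x ^ j * (1-x) ^ k) * ENNReal.ofReal
          (Real.Gamma (a + b) / (Real.Gamma a * Real.Gamma b)
            * (x ^ (a - 1) * (1 - x) ^ (b - 1)))
        = ENNReal.ofReal (Real.Gamma (a + b) / (Real.Gamma a * Real.Gamma b))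
            * ENNReal.ofReal (x ^ (a + j - 1) * (1 - x) ^ (b + k - 1)) := by
    intro x hx
    have hx0 : (0:ℝ) < x := hx.1
    have hx1 : (0:ℝ) < 1 - x := by linarith [hx.2]
    have e1 : x ^ (a + j - 1) = x ^ j * x ^ (a-1) := by
      rw [← Real.rpow_natCast x j, ← Real.rpow_add hx0]
      ring_nf
    have e2 : (1-x) ^ (b + k - 1) = (1-x) ^ k * (1-x) ^ (b-1) := by
      rw [← Real.rpow_natCast (1-x) k, ← Real.rpow_add hx1]
      ring_nf
    rw [← ENNReal.ofReal_mul (by positivity), ← ENNReal.ofReal_mul hC, e1, e2]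
    congr 1
    ring
  rw [setLIntegral_congr_fun measurableSet_Ioo key,
    lintegral_const_mul _ (by fun_prop)]
  rw [show a + (j:ℝ) - 1 = (a + j) - 1 by ring, show b + (k:ℝ) - 1 = (b + k) - 1 by ring]
  rw [beta_lintegral (by positivity) (by positivity)]
  rw [← ENNReal.ofReal_mul hC]
  congr 1
  have gj := Gamma_rr ha j
  have gk := Gamma_rr hb k
  have gjk := Gamma_rr (show 0 < a + b by linarith) (j+k)
  have e3 : a + (j:ℝ) + (b + k) = (a + b) + ((j+k : ℕ) : ℝ) := by push_cast; ring
  rw [e3, gjk, gj, gk]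
  have h1 := (Real.Gamma_pos_of_pos ha).ne'
  have h2 := (Real.Gamma_pos_of_pos hb).ne'
  have h3 := (Real.Gamma_pos_of_pos (show 0 < a + b by linarith)).ne'
  have h4 := (rr_pos (show 0 < a + b by linarith) (j+k)).ne'
  field_simp

lemma betaProb (ha : 0 < a) (hb : 0 < b) : IsProbabilityMeasure (_root_.betaMeasure a b) := by
  constructor
  rw [← lintegral_one]
  have := beta_lintegral_mix ha hb 0 0
  simp only [pow_zero, mul_one, ENNReal.ofReal_one] at this
  rw [this]
  norm_num [rr]

lemma beta_ae_Icc (a b : ℝ) : ∀ᵐ x ∂_root_.betaMeasure a b, x ∈ Set.Icc (0:ℝ) 1 := by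
  rw [ae_iff]
  rw [_root_.betaMeasure, withDensity_apply _ (by
    have : MeasurableSet (Set.Icc (0:ℝ) 1) := measurableSet_Icc
    exact (this.compl.congr (by ext x; simp)))]
  have : ∀ᵐ x ∂(volume.restrict {x : ℝ | ¬ x ∈ Set.Icc (0:ℝ) 1}),
      ENNReal.ofReal (Set.indicator (Set.Ioo 0 1)
      (fun t => Real.Gamma (a + b) / (Real.Gamma a * Real.Gamma b) *
        (t ^ (a - 1) * (1 - t) ^ (b - 1))) x) = 0 := by
    rw [ae_restrict_iff' (by
      have : MeasurableSet (Set.Icc (0:ℝ) 1) := measurableSet_Icc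
      exact (this.compl.congr (by ext x; simp)))]
    filter_upwards with x hx
    have : x ∉ Set.Ioo (0:ℝ) 1 := fun h => hx ⟨le_of_lt h.1, le_of_lt h.2⟩
    simp [Set.indicator_of_notMem this]
  rw [lintegral_congr_ae this, lintegral_zero]

lemma beta_integral_mix (ha : 0 < a) (hb : 0 < b) (j k : ℕ) :
    ∫ x, x ^ j * (1-x) ^ k ∂_root_.betaMeasure a b = rr a j * rr b k / rr (a+b) (j+k) := by
  have hnn : 0 ≤ᵐ[_root_.betaMeasure a b] fun x : ℝ => x ^ j * (1-x) ^ k := by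
    filter_upwards [beta_ae_Icc a b] with x hx
    have h1 : (0:ℝ) ≤ x := hx.1
    have h2 : (0:ℝ) ≤ 1 - x := by linarith [hx.2]
    positivity
  rw [integral_eq_lintegral_of_nonneg_ae hnn (by apply Continuous.aestronglyMeasurable; continuity)]
  rw [beta_lintegral_mix ha hb j k]
  rw [ENNReal.toReal_ofReal]
  have := rr_pos ha j
  have := rr_pos hb k
  have := rr_pos (show 0 < a + b by linarith) (j+k)
  positivity

end BetaMeas

lemma rr_one (m : ℕ) : rr 1 m = m.factorial := by
  induction m with
  | zero => simp [rr_zero]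
  | succ m ih => rw [rr_succ, ih, Nat.factorial_succ]; push_cast; ring

lemma algF1 {a α : ℝ} (hα : 0 < α) (n : ℕ) :
    ∑ k ∈ Finset.range (n+1), (n.choose k : ℝ) *
        ((rr a k / rr α k) * (rr 1 (n-k) * rr α k / rr (1+α) n))
      = rr (a+1) n / rr (1+α) n := by
  have hR : rr (1+α) n ≠ 0 := (rr_pos (by linarith) n).ne'
  have hnf : ((n.factorial : ℕ) : ℝ) ≠ 0 := Nat.cast_ne_zero.2 n.factorial_ne_zero
  have step : ∀ k ∈ Finset.range (n+1), (n.choose k : ℝ) *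
        ((rr a k / rr α k) * (rr 1 (n-k) * rr α k / rr (1+α) n))
      = ((n.factorial : ℝ) / rr (1+α) n) * (rr a k / (k.factorial : ℝ)) := by
    intro k hk
    rw [Finset.mem_range] at hk
    have hk' : k ≤ n := by omega
    have hcfR : (n.choose k : ℝ) * (k.factorial : ℝ) * ((n-k).factorial : ℝ) = n.factorial := by
      exact_mod_cast Nat.choose_mul_factorial_mul_factorial hk'
    have hαk : rr α k ≠ 0 := (rr_pos hα k).ne'
    have hkf : (k.factorial : ℝ) ≠ 0 := Nat.cast_ne_zero.2 k.factorial_ne_zero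
    rw [rr_one, ← hcfR]
    field_simp
  rw [Finset.sum_congr rfl step, ← Finset.mul_sum, hockey1]
  field_simp

lemma algF2 {a α : ℝ} (hα : 0 < α) (n : ℕ) :
    ∑ k ∈ Finset.range (n+1), (n.choose k : ℝ) *
        ((rr a k / rr α k) * (rr 1 ((n-k)+1) * rr α k / rr (1+α) (n+1)))
      = rr (a+2) n / rr (1+α) (n+1) := by
  have hR : rr (1+α) (n+1) ≠ 0 := (rr_pos (by linarith) (n+1)).ne'
  have hnf : ((n.factorial : ℕ) : ℝ) ≠ 0 := Nat.cast_ne_zero.2 n.factorial_ne_zero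
  have step : ∀ k ∈ Finset.range (n+1), (n.choose k : ℝ) *
        ((rr a k / rr α k) * (rr 1 ((n-k)+1) * rr α k / rr (1+α) (n+1)))
      = ((n.factorial : ℝ) / rr (1+α) (n+1)) * (((n:ℝ) + 1 - k) * rr a k / (k.factorial : ℝ)) := by
    intro k hk
    rw [Finset.mem_range] at hk
    have hk' : k ≤ n := by omega
    have hcfR : (n.choose k : ℝ) * (k.factorial : ℝ) * ((n-k).factorial : ℝ) = n.factorial := by
      exact_mod_cast Nat.choose_mul_factorial_mul_factorial hk'
    have hαk : rr α k ≠ 0 := (rr_pos hα k).ne'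
    have hkf : (k.factorial : ℝ) ≠ 0 := Nat.cast_ne_zero.2 k.factorial_ne_zero
    have hfs : (((n-k)+1).factorial : ℝ) = ((n-k).factorial : ℝ) * ((n:ℝ) + 1 - k) := by
      rw [Nat.factorial_succ]
      push_cast [Nat.cast_sub hk']
      ring
    rw [rr_one, hfs, ← hcfR]
    field_simp
  rw [Finset.sum_congr rfl step, ← Finset.mul_sum]
  have h2 : ∑ k ∈ Finset.range (n+1), ((n:ℝ) + 1 - k) * rr a k / (k.factorial : ℝ)
      = rr (a+2) n / (n.factorial : ℝ) := hockey2 a n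
  have h3 : ∑ k ∈ Finset.range (n+1), ((n:ℝ) + 1 - k) * rr a k / (k.factorial : ℝ)
      = ∑ k ∈ Finset.range (n+1), (((n:ℝ) + 1 - k) * rr a k / (k.factorial : ℝ)) := rfl
  rw [h2]
  field_simp

section ProdExp

variable {μ ν : Measure ℝ} [IsProbabilityMeasure μ] [IsProbabilityMeasure ν]

lemma prod_exp (hμ : ∀ᵐ x ∂μ, x ∈ Set.Icc (0:ℝ) 1) (hν : ∀ᵐ x ∂ν, x ∈ Set.Icc (0:ℝ) 1)
    (n m : ℕ) :
    ∫ z, ((1 - z.2) * z.1 + z.2)^n * z.2^m ∂μ.prod ν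
      = ∑ k ∈ Finset.range (n+1), (n.choose k : ℝ) *
          ((∫ x, x^(n-k) * (1-x)^k ∂μ) * ∫ y, y^(k+m) ∂ν) := by
  have hpt : ∀ z : ℝ × ℝ, ((1 - z.2) * z.1 + z.2)^n * z.2^m
      = ∑ k ∈ Finset.range (n+1), (n.choose k : ℝ) *
          ((z.1^(n-k) * (1-z.1)^k) * z.2^(k+m)) := by
    intro z
    have h : (1 - z.2) * z.1 + z.2 = z.2 * (1 - z.1) + z.1 := by ring
    rw [h, add_pow, Finset.sum_mul]
    apply Finset.sum_congr rfl
    intro k hk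
    rw [mul_pow, pow_add]
    ring
  rw [integral_congr_ae (Filter.Eventually.of_forall hpt)]
  rw [integral_finset_sum _ (fun k _ => by
    apply Integrable.const_mul
    exact (integrable_of_cont hμ (fun x => x^(n-k) * (1-x)^k) (by continuity)).mul_prod
      (integrable_of_cont hν (fun y => y^(k+m)) (by continuity)))]
  apply Finset.sum_congr rfl
  intro k _
  rw [integral_const_mul]
  congr 1
  exact integral_prod_mul (f := fun x => x^(n-k) * (1-x)^k) (g := fun y => y^(k+m))

lemma prod_expB (hμ : ∀ᵐ x ∂μ, x ∈ Set.Icc (0:ℝ) 1) (hν : ∀ᵐ x ∂ν, x ∈ Set.Icc (0:ℝ) 1)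
    (n m : ℕ) :
    ∫ z, ((1 - z.2) * z.1 + z.2)^n * z.2^m ∂μ.prod ν
      = ∑ k ∈ Finset.range (n+1), (n.choose k : ℝ) *
          ((∫ x, x^k ∂μ) * ∫ y, y^((n-k)+m) * (1-y)^k ∂ν) := by
  have hpt : ∀ z : ℝ × ℝ, ((1 - z.2) * z.1 + z.2)^n * z.2^m
      = ∑ k ∈ Finset.range (n+1), (n.choose k : ℝ) *
          (z.1^k * (z.2^((n-k)+m) * (1-z.2)^k)) := by
    intro z
    have h : (1 - z.2) * z.1 + z.2 = z.1 * (1 - z.2) + z.2 := by ring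
    rw [h, add_pow, Finset.sum_mul]
    apply Finset.sum_congr rfl
    intro k hk
    rw [mul_pow, pow_add]
    ring
  rw [integral_congr_ae (Filter.Eventually.of_forall hpt)]
  rw [integral_finset_sum _ (fun k _ => by
    apply Integrable.const_mul
    exact (integrable_of_cont hμ (fun x => x^k) (by continuity)).mul_prod
      (integrable_of_cont hν (fun y => y^((n-k)+m) * (1-y)^k) (by continuity)))]
  apply Finset.sum_congr rfl
  intro k _
  rw [integral_const_mul]
  congr 1
  exact integral_prod_mul (f := fun x => x^k) (g := fun y => y^((n-k)+m) * (1-y)^k)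

end ProdExp

lemma moments_unique (p c : ℝ) (mZ mW MZ MW : ℕ → ℝ) (D DT : ℕ → ℕ → ℝ)
    (hD0 : ∀ j, D j 0 = mZ j) (hDT0 : ∀ j, DT j 0 = MZ j)
    (hDrec : ∀ j k, D j (k+1) = D j k - D (j+1) k)
    (hDTrec : ∀ j k, DT j (k+1) = DT j k - DT (j+1) k)
    (hmZ0 : mZ 0 = MZ 0) (hmZ1 : mZ 1 = MZ 1) (hmW0 : mW 0 = MW 0)
    (hE1 : ∀ n, mZ (n+1) = p * ∑ k ∈ Finset.range (n+1), (n.choose k : ℝ) * (D (n-k) k * mW k))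
    (hE2 : ∀ n, mZ (n+2) = c * ∑ k ∈ Finset.range (n+1), (n.choose k : ℝ) * (D (n-k) k * mW (k+1)))
    (hF1 : ∀ n, MZ (n+1) = p * ∑ k ∈ Finset.range (n+1), (n.choose k : ℝ) * (DT (n-k) k * MW k))
    (hF2 : ∀ n, MZ (n+2) = c * ∑ k ∈ Finset.range (n+1), (n.choose k : ℝ) * (DT (n-k) k * MW (k+1)))
    (hnd : ∀ n, c * DT 0 n - p * DT 0 (n+1) ≠ 0) :
    (∀ n, mZ n = MZ n) ∧ (∀ n, mW n = MW n) := by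
  have main : ∀ n : ℕ, (∀ i, i ≤ n+1 → mZ i = MZ i) ∧ (∀ i, i ≤ n → mW i = MW i) := by
    intro n
    induction n with
    | zero =>
      constructor
      · intro i hi; interval_cases i
        · exact hmZ0
        · exact hmZ1
      · intro i hi; interval_cases i; exact hmW0
    | succ n ih =>
      obtain ⟨ihZ, ihW⟩ := ih
      have hDeq : ∀ k j, j + k ≤ n+1 → D j k = DT j k := by
        intro k
        induction k with
        | zero => intro j hj; rw [hD0, hDT0]; exact ihZ j (by omega)
        | succ k ihk =>
          intro j hj
          rw [hDrec, hDTrec, ihk j (by omega), ihk (j+1) (by omega)]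
      have key2 : mZ (n+2) - MZ (n+2) = c * (DT 0 n * (mW (n+1) - MW (n+1))) := by
        rw [hE2 n, hF2 n, Finset.sum_range_succ, Finset.sum_range_succ]
        have hsame : ∀ k ∈ Finset.range n, (n.choose k : ℝ) * (D (n-k) k * mW (k+1))
            = (n.choose k : ℝ) * (DT (n-k) k * MW (k+1)) := by
          intro k hk
          rw [Finset.mem_range] at hk
          rw [hDeq k (n-k) (by omega), ihW (k+1) (by omega)]
        rw [Finset.sum_congr rfl hsame, hDeq n (n-n) (by omega)]
        simp only [Nat.sub_self, Nat.choose_self, Nat.cast_one]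
        ring
      have key1 : mZ (n+2) - MZ (n+2) = p * (DT 0 (n+1) * (mW (n+1) - MW (n+1))) := by
        have e1 := hE1 (n+1)
        have f1 := hF1 (n+1)
        rw [Finset.sum_range_succ] at e1 f1
        have hsame : ∀ k ∈ Finset.range (n+1), ((n+1).choose k : ℝ) * (D (n+1-k) k * mW k)
            = ((n+1).choose k : ℝ) * (DT (n+1-k) k * MW k) := by
          intro k hk
          rw [Finset.mem_range] at hk
          rw [hDeq k (n+1-k) (by omega), ihW k (by omega)]
        rw [Finset.sum_congr rfl hsame, hDeq (n+1) (n+1-(n+1)) (by omega)] at e1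
        rw [e1, f1]
        simp only [Nat.sub_self, Nat.choose_self, Nat.cast_one]
        ring
      have hδ : mW (n+1) = MW (n+1) := by
        have heq := key1.symm.trans key2
        have h2 : (c * DT 0 n - p * DT 0 (n+1)) * (mW (n+1) - MW (n+1)) = 0 := by
          linear_combination -heq
        rcases mul_eq_zero.mp h2 with h | h
        · exact absurd h (hnd n)
        · linarith
      refine ⟨?_, ?_⟩
      · intro i hi
        rcases Nat.lt_or_ge i (n+2) with h | h
        · exact ihZ i (by omega)
        · have hi2 : i = n+2 := by omega
          subst hi2
          have : mZ (n+2) - MZ (n+2) = 0 := by rw [key2, hδ]; ring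
          linarith
      · intro i hi
        rcases Nat.lt_or_ge i (n+1) with h | h
        · exact ihW i (by omega)
        · have hi2 : i = n+1 := by omega
          subst hi2
          exact hδ
  exact ⟨fun n => (main n).1 n (by omega), fun n => (main n).2 n le_rfl⟩


lemma T_mem {z w : ℝ} (hz : z ∈ Set.Icc (0:ℝ) 1) (hw : w ∈ Set.Icc (0:ℝ) 1) :
    (1 - w) * z + w ∈ Set.Icc (0:ℝ) 1 := by
  constructor
  · nlinarith [hz.1, hw.1, hz.2, hw.2]
  · nlinarith [hz.1, hw.1, hz.2, hw.2]

lemma absp {x : ℝ} (hx : x ∈ Set.Icc (0:ℝ) 1) (j : ℕ) : |x ^ j| ≤ 1 := by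
  rw [abs_pow]
  apply pow_le_one₀ (abs_nonneg x)
  rw [abs_of_nonneg hx.1]
  exact hx.2

lemma absp2 {x y : ℝ} (hx : x ∈ Set.Icc (0:ℝ) 1) (hy : y ∈ Set.Icc (0:ℝ) 1) (j k : ℕ) :
    |x ^ j * y ^ k| ≤ 1 := by
  rw [abs_mul]
  calc |x^j| * |y^k| ≤ 1 * 1 :=
        mul_le_mul (absp hx j) (absp hy k) (abs_nonneg _) zero_le_one
    _ = 1 := one_mul 1

set_option maxHeartbeats 1000000 in
/-- Characterization of the general Beta distribution: if `Z, W` are independent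
`[0,1]`-valued random variables with `E[W] ∈ (0,1)`, `p ∈ (0,1)`, `c ≥ 0`, and for
all measurable `g ≥ 0`: `E[g(Z)Z] = p·E[g((1-W)Z+W)]` and
`E[g(Z)Z²] = c·E[g((1-W)Z+W)·W]`, then, with `α := (1-E[W])/E[W]`,
`Z ~ Be(pα, (1-p)α)`, `W ~ Be(1,α)` and `c = p(αp+1)`. -/
theorem stmt14 {Ω : Type*} [MeasurableSpace Ω] (P : Measure Ω) [IsProbabilityMeasure P]
    (Z W : Ω → ℝ) (hZm : Measurable Z) (hWm : Measurable W)
    (hZ01 : ∀ ω, Z ω ∈ Set.Icc (0 : ℝ) 1) (hW01 : ∀ ω, W ω ∈ Set.Icc (0 : ℝ) 1)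
    (hindep : IndepFun Z W P)
    (hEW : ∫ ω, W ω ∂P ∈ Set.Ioo (0 : ℝ) 1)
    (p c α : ℝ) (hp : p ∈ Set.Ioo (0 : ℝ) 1) (hc : 0 ≤ c)
    (hαdef : α = (1 - ∫ ω, W ω ∂P) / ∫ ω, W ω ∂P)
    (heq1 : ∀ g : ℝ → ℝ≥0∞, Measurable g →
      ∫⁻ ω, g (Z ω) * ENNReal.ofReal (Z ω) ∂P
        = ENNReal.ofReal p * ∫⁻ ω, g ((1 - W ω) * Z ω + W ω) ∂P)
    (heq2 : ∀ g : ℝ → ℝ≥0∞, Measurable g →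
      ∫⁻ ω, g (Z ω) * ENNReal.ofReal (Z ω) ^ 2 ∂P
        = ENNReal.ofReal c * ∫⁻ ω, g ((1 - W ω) * Z ω + W ω) * ENNReal.ofReal (W ω) ∂P) :
    P.map Z = _root_.betaMeasure (p * α) ((1 - p) * α) ∧
      P.map W = _root_.betaMeasure 1 α ∧ c = p * (α * p + 1) := by
  -- basic quantities
  set m := ∫ ω, W ω ∂P with hm_def
  obtain ⟨hm0, hm1⟩ := hEW
  have hα : 0 < α := by rw [hαdef]; exact div_pos (by linarith) hm0
  have hmval : m * (1 + α) = 1 := by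
    rw [hαdef]
    field_simp
    ring
  set a := p * α with ha_def
  set b := (1 - p) * α with hb_def
  have ha : 0 < a := mul_pos hp.1 hα
  have hb : 0 < b := mul_pos (by linarith [hp.2]) hα
  have hab : a + b = α := by rw [ha_def, hb_def]; ring
  -- mapped measures
  haveI hPZ : IsProbabilityMeasure (P.map Z) := Measure.isProbabilityMeasure_map hZm.aemeasurable
  haveI hPW : IsProbabilityMeasure (P.map W) := Measure.isProbabilityMeasure_map hWm.aemeasurable
  haveI hB1 : IsProbabilityMeasure (_root_.betaMeasure a b) := betaProb ha hb
  haveI hB2 : IsProbabilityMeasure (_root_.betaMeasure 1 α) := betaProb one_pos hα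
  have hμZae : ∀ᵐ x ∂(P.map Z), x ∈ Set.Icc (0:ℝ) 1 := by
    exact (ae_map_iff hZm.aemeasurable measurableSet_Icc).2 (Filter.Eventually.of_forall hZ01)
  have hμWae : ∀ᵐ x ∂(P.map W), x ∈ Set.Icc (0:ℝ) 1 := by
    exact (ae_map_iff hWm.aemeasurable measurableSet_Icc).2 (Filter.Eventually.of_forall hW01)
  have hpair : P.map (fun ω => (Z ω, W ω)) = (P.map Z).prod (P.map W) :=
    (indepFun_iff_map_prod_eq_prod_map_map hZm.aemeasurable hWm.aemeasurable).1 hindep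
  -- T basics
  have hTmem : ∀ ω, (1 - W ω) * Z ω + W ω ∈ Set.Icc (0:ℝ) 1 :=
    fun ω => T_mem (hZ01 ω) (hW01 ω)
  have hTmes : Measurable fun ω => (1 - W ω) * Z ω + W ω :=
    ((measurable_const.sub hWm).mul hZm).add hWm
  -- moment identities from the lintegral hypotheses
  have hmom1 : ∀ n : ℕ, (∫ ω, Z ω ^ (n+1) ∂P)
      = p * ∫ ω, ((1 - W ω) * Z ω + W ω) ^ n ∂P := by
    intro n
    have h := heq1 (fun x => (ENNReal.ofReal x)^n) (ENNReal.measurable_ofReal.pow_const n)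
    beta_reduce at h
    have hL : ∫⁻ ω, (ENNReal.ofReal (Z ω))^n * ENNReal.ofReal (Z ω) ∂P
        = ENNReal.ofReal (∫ ω, Z ω ^ (n+1) ∂P) := by
      rw [lintegral_congr (g := fun ω => ENNReal.ofReal (Z ω ^ (n+1))) (fun ω => by
        rw [← ENNReal.ofReal_pow (hZ01 ω).1, ← ENNReal.ofReal_mul (pow_nonneg (hZ01 ω).1 n),
          ← pow_succ])]
      exact (ofReal_integral_eq_lintegral_ofReal
        ((integrable_const (1:ℝ)).mono' (hZm.pow_const (n+1)).aestronglyMeasurable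
          (Filter.Eventually.of_forall fun ω => absp (hZ01 ω) (n+1)))
        (Filter.Eventually.of_forall fun ω => pow_nonneg (hZ01 ω).1 (n+1))).symm
    have hR : ∫⁻ ω, (ENNReal.ofReal ((1 - W ω) * Z ω + W ω))^n ∂P
        = ENNReal.ofReal (∫ ω, ((1 - W ω) * Z ω + W ω) ^ n ∂P) := by
      rw [lintegral_congr (g := fun ω => ENNReal.ofReal (((1 - W ω) * Z ω + W ω) ^ n))
        (fun ω => by rw [← ENNReal.ofReal_pow (hTmem ω).1])]
      exact (ofReal_integral_eq_lintegral_ofReal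
        ((integrable_const (1:ℝ)).mono' (hTmes.pow_const n).aestronglyMeasurable
          (Filter.Eventually.of_forall fun ω => absp (hTmem ω) n))
        (Filter.Eventually.of_forall fun ω => pow_nonneg (hTmem ω).1 n)).symm
    rw [hL, hR, ← ENNReal.ofReal_mul hp.1.le] at h
    exact (ENNReal.ofReal_eq_ofReal_iff
      (integral_nonneg fun ω => pow_nonneg (hZ01 ω).1 _)
      (mul_nonneg hp.1.le (integral_nonneg fun ω => pow_nonneg (hTmem ω).1 _))).1 h
  have hmom2 : ∀ n : ℕ, (∫ ω, Z ω ^ (n+2) ∂P)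
      = c * ∫ ω, ((1 - W ω) * Z ω + W ω) ^ n * W ω ∂P := by
    intro n
    have h := heq2 (fun x => (ENNReal.ofReal x)^n) (ENNReal.measurable_ofReal.pow_const n)
    beta_reduce at h
    have hL : ∫⁻ ω, (ENNReal.ofReal (Z ω))^n * ENNReal.ofReal (Z ω) ^ 2 ∂P
        = ENNReal.ofReal (∫ ω, Z ω ^ (n+2) ∂P) := by
      rw [lintegral_congr (g := fun ω => ENNReal.ofReal (Z ω ^ (n+2))) (fun ω => by
        rw [← ENNReal.ofReal_pow (hZ01 ω).1, ← ENNReal.ofReal_pow (hZ01 ω).1,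
          ← ENNReal.ofReal_mul (pow_nonneg (hZ01 ω).1 n), ← pow_add])]
      exact (ofReal_integral_eq_lintegral_ofReal
        ((integrable_const (1:ℝ)).mono' (hZm.pow_const (n+2)).aestronglyMeasurable
          (Filter.Eventually.of_forall fun ω => absp (hZ01 ω) (n+2)))
        (Filter.Eventually.of_forall fun ω => pow_nonneg (hZ01 ω).1 (n+2))).symm
    have hR : ∫⁻ ω, (ENNReal.ofReal ((1 - W ω) * Z ω + W ω))^n * ENNReal.ofReal (W ω) ∂P
        = ENNReal.ofReal (∫ ω, ((1 - W ω) * Z ω + W ω) ^ n * W ω ∂P) := by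
      rw [lintegral_congr (g := fun ω =>
          ENNReal.ofReal (((1 - W ω) * Z ω + W ω) ^ n * W ω)) (fun ω => by
        rw [← ENNReal.ofReal_pow (hTmem ω).1,
          ← ENNReal.ofReal_mul (pow_nonneg (hTmem ω).1 n)])]
      have hbnd : ∀ ω, |((1 - W ω) * Z ω + W ω) ^ n * W ω| ≤ 1 := by
        intro ω
        have := absp2 (hTmem ω) (hW01 ω) n 1
        rwa [pow_one] at this
      exact (ofReal_integral_eq_lintegral_ofReal
        ((integrable_const (1:ℝ)).mono' ((hTmes.pow_const n).mul hWm).aestronglyMeasurable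
          (Filter.Eventually.of_forall hbnd))
        (Filter.Eventually.of_forall fun ω =>
          mul_nonneg (pow_nonneg (hTmem ω).1 n) (hW01 ω).1)).symm
    rw [hL, hR, ← ENNReal.ofReal_mul hc] at h
    exact (ENNReal.ofReal_eq_ofReal_iff
      (integral_nonneg fun ω => pow_nonneg (hZ01 ω).1 _)
      (mul_nonneg hc (integral_nonneg fun ω =>
        mul_nonneg (pow_nonneg (hTmem ω).1 n) (hW01 ω).1))).1 h
  -- transfer to mapped measures
  have hmapZpow : ∀ j : ℕ, ∫ x, x ^ j ∂(P.map Z) = ∫ ω, Z ω ^ j ∂P := fun j =>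
    integral_map hZm.aemeasurable (Continuous.aestronglyMeasurable (by fun_prop))
  have hmapWpow : ∀ j : ℕ, ∫ y, y ^ j ∂(P.map W) = ∫ ω, W ω ^ j ∂P := fun j =>
    integral_map hWm.aemeasurable (Continuous.aestronglyMeasurable (by fun_prop))
  have hmapT : ∀ n m' : ℕ, ∫ z, ((1 - z.2) * z.1 + z.2)^n * z.2^m' ∂((P.map Z).prod (P.map W))
      = ∫ ω, ((1 - W ω) * Z ω + W ω)^n * W ω ^ m' ∂P := by
    intro n m'
    rw [← hpair, integral_map (hZm.prodMk hWm).aemeasurable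
      (Continuous.aestronglyMeasurable (by fun_prop))]
  -- expansions of the moment identities
  have hE1 : ∀ n : ℕ, (∫ x, x^(n+1) ∂(P.map Z))
      = p * ∑ k ∈ Finset.range (n+1), (n.choose k : ℝ) *
          ((∫ x, x^(n-k) * (1-x)^k ∂(P.map Z)) * (∫ y, y^k ∂(P.map W))) := by
    intro n
    have e := prod_exp hμZae hμWae n 0
    have t := hmapT n 0
    simp only [pow_zero, mul_one, add_zero] at t e
    rw [hmapZpow (n+1), hmom1 n, ← t, e]
  have hE2 : ∀ n : ℕ, (∫ x, x^(n+2) ∂(P.map Z))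
      = c * ∑ k ∈ Finset.range (n+1), (n.choose k : ℝ) *
          ((∫ x, x^(n-k) * (1-x)^k ∂(P.map Z)) * (∫ y, y^(k+1) ∂(P.map W))) := by
    intro n
    have e := prod_exp hμZae hμWae n 1
    have t := hmapT n 1
    simp only [pow_one] at t e
    rw [hmapZpow (n+2), hmom2 n, ← t, e]
  -- beta moment values
  have hmix1 : ∀ j k : ℕ, ∫ x, x^j * (1-x)^k ∂_root_.betaMeasure a b
      = rr a j * rr b k / rr α (j+k) := fun j k => by
    rw [beta_integral_mix ha hb j k, hab]
  have hmix2 : ∀ j k : ℕ, ∫ y, y^j * (1-y)^k ∂_root_.betaMeasure 1 α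
      = rr 1 j * rr α k / rr (1+α) (j+k) := beta_integral_mix one_pos hα
  have hmix1' : ∀ j : ℕ, ∫ x, x^j ∂_root_.betaMeasure a b = rr a j / rr α j := fun j => by
    have := hmix1 j 0
    simpa [rr_zero] using this
  have hmix2' : ∀ j : ℕ, ∫ y, y^j ∂_root_.betaMeasure 1 α = rr 1 j / rr (1+α) j := fun j => by
    have := hmix2 j 0
    simpa [rr_zero] using this
  -- small values
  have hW1v : ∫ y, y^1 ∂(P.map W) = m := by
    rw [hmapWpow 1]
    simp only [pow_one]
    exact hm_def.symm
  have hZ1v : ∫ x, x^1 ∂(P.map Z) = p := by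
    have h := hE1 0
    simp only [zero_add, Finset.sum_range_one, Nat.choose_self, Nat.cast_one, Nat.sub_self,
      pow_zero, mul_one, one_mul] at h
    rw [h]
    simp [measure_univ]
  have hZint : Integrable Z P := (integrable_const (1:ℝ)).mono' hZm.aestronglyMeasurable
    (Filter.Eventually.of_forall fun ω => by
      rw [Real.norm_eq_abs, abs_of_nonneg (hZ01 ω).1]; exact (hZ01 ω).2)
  have hWint : Integrable W P := (integrable_const (1:ℝ)).mono' hWm.aestronglyMeasurable
    (Filter.Eventually.of_forall fun ω => by
      rw [Real.norm_eq_abs, abs_of_nonneg (hW01 ω).1]; exact (hW01 ω).2)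
  have hWZint : Integrable (fun ω => W ω * Z ω) P :=
    (integrable_const (1:ℝ)).mono' (hWm.mul hZm).aestronglyMeasurable
      (Filter.Eventually.of_forall fun ω => by
        rw [Real.norm_eq_abs]
        have := absp2 (hW01 ω) (hZ01 ω) 1 1
        simpa using this)
  have hZval : ∫ ω, Z ω ∂P = p := by
    have h := hZ1v
    rw [hmapZpow 1] at h
    simpa using h
  have hWmul : ∫ ω, W ω * Z ω ∂P = m * p := by
    have h : ∫ ω, W ω * Z ω ∂P = (∫ ω, W ω ∂P) * ∫ ω, Z ω ∂P :=
      hindep.symm.integral_mul_eq_mul_integral hWm.aestronglyMeasurable hZm.aestronglyMeasurable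
    rw [h, hZval, ← hm_def]
  have hTval : ∫ ω, ((1 - W ω) * Z ω + W ω) ∂P = p + (1-p) * m := by
    have h1 : ∫ ω, (Z ω + (W ω - W ω * Z ω)) ∂P
        = (∫ ω, Z ω ∂P) + ∫ ω, (W ω - W ω * Z ω) ∂P := integral_add hZint (hWint.sub hWZint)
    have h2 : ∫ ω, (W ω - W ω * Z ω) ∂P = (∫ ω, W ω ∂P) - ∫ ω, W ω * Z ω ∂P :=
      integral_sub hWint hWZint
    rw [show (fun ω => (1 - W ω) * Z ω + W ω) = fun ω => Z ω + (W ω - W ω * Z ω)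
        from funext fun ω => by ring, h1, h2, hZval, hWmul, ← hm_def]
    ring
  -- value of c
  have hc2 : c * m = p * (p + (1-p) * m) := by
    have e20 := hmom2 0
    simp only [pow_zero, one_mul] at e20
    rw [← hm_def] at e20
    have e11 := hmom1 1
    simp only [pow_one] at e11
    rw [hTval] at e11
    norm_num at e20 e11
    rw [← e20, e11]
  have hcval : c = p * (α * p + 1) := by
    have hgoal : c * m = (p * (α * p + 1)) * m := by
      linear_combination hc2 - p * p * hmval
    exact mul_right_cancel₀ (ne_of_gt hm0) hgoal
  -- target-side identities
  have hF1 : ∀ n : ℕ, rr a (n+1) / rr α (n+1)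
      = p * ∑ k ∈ Finset.range (n+1), (n.choose k : ℝ) *
          ((rr a (n-k) * rr b k / rr α ((n-k)+k)) * (rr 1 k / rr (1+α) k)) := by
    intro n
    have h1 := prod_exp (μ := _root_.betaMeasure a b) (ν := _root_.betaMeasure 1 α)
      (beta_ae_Icc a b) (beta_ae_Icc 1 α) n 0
    have h2 := prod_expB (μ := _root_.betaMeasure a b) (ν := _root_.betaMeasure 1 α)
      (beta_ae_Icc a b) (beta_ae_Icc 1 α) n 0
    simp only [add_zero] at h1 h2
    have h1' : ∫ z, ((1 - z.2) * z.1 + z.2)^n * z.2^0 ∂(_root_.betaMeasure a b).prod (_root_.betaMeasure 1 α)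
        = ∑ k ∈ Finset.range (n+1), (n.choose k : ℝ) *
            ((rr a (n-k) * rr b k / rr α ((n-k)+k)) * (rr 1 k / rr (1+α) k)) := by
      rw [h1]
      refine Finset.sum_congr rfl fun k hk => ?_
      rw [hmix1 (n-k) k, hmix2' k]
    have h2' : ∫ z, ((1 - z.2) * z.1 + z.2)^n * z.2^0 ∂(_root_.betaMeasure a b).prod (_root_.betaMeasure 1 α)
        = ∑ k ∈ Finset.range (n+1), (n.choose k : ℝ) *
            ((rr a k / rr α k) * (rr 1 (n-k) * rr α k / rr (1+α) n)) := by
      rw [h2]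
      refine Finset.sum_congr rfl fun k hk => ?_
      rw [Finset.mem_range] at hk
      have h4 := hmix2 (n-k) k
      rw [Nat.sub_add_cancel (by omega : k ≤ n)] at h4
      rw [hmix1' k, h4]
    have hsum : (∑ k ∈ Finset.range (n+1), (n.choose k : ℝ) *
          ((rr a (n-k) * rr b k / rr α ((n-k)+k)) * (rr 1 k / rr (1+α) k)))
        = rr (a+1) n / rr (1+α) n := by
      rw [← h1', h2']
      exact algF1 hα n
    rw [hsum, rr_succ' a n, rr_succ' α n, show (1:ℝ)+α = α+1 from by ring, ha_def]
    have h4 : rr (α+1) n ≠ 0 := (rr_pos (by linarith) n).ne'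
    field_simp
  have hF2 : ∀ n : ℕ, rr a (n+2) / rr α (n+2)
      = c * ∑ k ∈ Finset.range (n+1), (n.choose k : ℝ) *
          ((rr a (n-k) * rr b k / rr α ((n-k)+k)) * (rr 1 (k+1) / rr (1+α) (k+1))) := by
    intro n
    have h1 := prod_exp (μ := _root_.betaMeasure a b) (ν := _root_.betaMeasure 1 α)
      (beta_ae_Icc a b) (beta_ae_Icc 1 α) n 1
    have h2 := prod_expB (μ := _root_.betaMeasure a b) (ν := _root_.betaMeasure 1 α)
      (beta_ae_Icc a b) (beta_ae_Icc 1 α) n 1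
    have h1' : ∫ z, ((1 - z.2) * z.1 + z.2)^n * z.2^1 ∂(_root_.betaMeasure a b).prod (_root_.betaMeasure 1 α)
        = ∑ k ∈ Finset.range (n+1), (n.choose k : ℝ) *
            ((rr a (n-k) * rr b k / rr α ((n-k)+k)) * (rr 1 (k+1) / rr (1+α) (k+1))) := by
      rw [h1]
      refine Finset.sum_congr rfl fun k hk => ?_
      rw [hmix1 (n-k) k, hmix2' (k+1)]
    have h2' : ∫ z, ((1 - z.2) * z.1 + z.2)^n * z.2^1 ∂(_root_.betaMeasure a b).prod (_root_.betaMeasure 1 α)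
        = ∑ k ∈ Finset.range (n+1), (n.choose k : ℝ) *
            ((rr a k / rr α k) * (rr 1 ((n-k)+1) * rr α k / rr (1+α) (n+1))) := by
      rw [h2]
      refine Finset.sum_congr rfl fun k hk => ?_
      rw [Finset.mem_range] at hk
      have h4 := hmix2 ((n-k)+1) k
      rw [show (n-k)+1+k = n+1 from by omega] at h4
      rw [hmix1' k, h4]
    have hsum : (∑ k ∈ Finset.range (n+1), (n.choose k : ℝ) *
          ((rr a (n-k) * rr b k / rr α ((n-k)+k)) * (rr 1 (k+1) / rr (1+α) (k+1))))
        = rr (a+2) n / rr (1+α) (n+1) := by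
      rw [← h1', h2']
      exact algF2 hα n
    rw [hsum]
    have e1 : rr a (n+2) = a * ((a+1) * rr (a+2) n) := by
      rw [rr_succ' a (n+1), rr_succ' (a+1) n, show a+1+1 = a+2 from by ring]
    have e2 : rr α (n+2) = α * rr (α+1) (n+1) := rr_succ' α (n+1)
    rw [e1, e2, hcval, ha_def, show (1:ℝ)+α = α+1 from by ring]
    have h4 : rr (α+1) (n+1) ≠ 0 := (rr_pos (by linarith) (n+1)).ne'
    field_simp
  -- nondegeneracy
  have hnd : ∀ n : ℕ, c * (rr a 0 * rr b n / rr α (0+n))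
      - p * (rr a 0 * rr b (n+1) / rr α (0+(n+1))) ≠ 0 := by
    intro n
    simp only [rr_zero, one_mul, Nat.zero_add]
    have hpa : p * (a + b) = a := by rw [hab]
    have hval : c * (rr b n / rr α n) - p * (rr b (n+1) / rr α (n+1))
        = p * a * (rr b n * (α + n + 1)) / rr α (n+1) := by
      rw [hcval, rr_succ b n, rr_succ α n, ← hab]
      have h5 : rr (a+b) n ≠ 0 := (rr_pos (by linarith) n).ne'
      have h6 : a + b + (n:ℝ) ≠ 0 := by positivity
      field_simp
      linear_combination (rr b n * rr (a+b) n * (a+b+(n:ℝ)) * (a+b) * p) * hpa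
    rw [hval]
    have hpos : 0 < p * a * (rr b n * (α + n + 1)) / rr α (n+1) :=
      div_pos (mul_pos (mul_pos hp.1 ha)
        (mul_pos (rr_pos hb n) (by positivity))) (rr_pos hα (n+1))
    exact hpos.ne'
  -- apply uniqueness of the moment recursion
  obtain ⟨hallZ, hallW⟩ := moments_unique p c
    (fun n => ∫ x, x^n ∂(P.map Z)) (fun n => ∫ y, y^n ∂(P.map W))
    (fun n => rr a n / rr α n) (fun n => rr 1 n / rr (1+α) n)
    (fun j k => ∫ x, x^j * (1-x)^k ∂(P.map Z))
    (fun j k => rr a j * rr b k / rr α (j+k))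
    (fun j => by simp)
    (fun j => by simp [rr_zero])
    (fun j k => by
      beta_reduce
      rw [show (fun x : ℝ => x^j * (1-x)^(k+1))
          = fun x : ℝ => x^j * (1-x)^k - x^(j+1) * (1-x)^k from funext fun x => by ring,
        integral_sub (integrable_of_cont hμZae _ (by fun_prop))
          (integrable_of_cont hμZae _ (by fun_prop))])
    (fun j k => by
      beta_reduce
      have e1 : j+(k+1) = (j+k)+1 := by omega
      have e2 : (j+1)+k = (j+k)+1 := by omega
      rw [e1, e2, rr_succ α (j+k), rr_succ b k, rr_succ a j, ← hab]
      have h5 : rr (a+b) (j+k) ≠ 0 := (rr_pos (by linarith) (j+k)).ne'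
      have h6 : a + b + ((j+k : ℕ):ℝ) ≠ 0 := by positivity
      field_simp
      push_cast
      ring)
    (by simp [rr_zero])
    (by
      beta_reduce
      rw [hZ1v]
      simp only [rr, Finset.prod_range_one]
      rw [ha_def]
      push_cast
      field_simp
      ring)
    (by simp [rr_zero])
    hE1 hE2 hF1 hF2 hnd
  -- conclude
  refine ⟨?_, ?_, hcval⟩
  · apply ext_of_moments _ _ hμZae (beta_ae_Icc a b)
    intro n
    rw [hallZ n, hmix1' n]
  · apply ext_of_moments _ _ hμWae (beta_ae_Icc 1 α)
    intro n
    rw [hallW n, hmix2' n]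
end

section
/- Fix nonnegative integers k_1,...,k_{n-1}, set k_0 := k_1 + ⋯ + k_{n-1}, and let α > 0, α_n > 0. Define b_k := (Γ(α)/Γ(α + k_0 + k)) · Γ(α_n + k)/Γ(α_n) · C, where C := ∏_{i=1}^{n-1} Γ(α_i + k_i)/Γ(α_i) for positive α_1,...,α_{n-1} with α = α_1 + ⋯ + α_n. Then the recursion b_{k+1} = α_n · Σ_{r=0}^{k} (k choose r) · b_r · Γ(k+1-r)Γ(k_0 + α + r)/Γ(α + k_0 + k + 1) holds for all k ≥ 0. -/
lemma aux17 (αn : ℝ) (hαn : 0 < αn) : ∀ k : ℕ,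
    ∑ r ∈ Finset.range (k + 1), Real.Gamma (αn + r) / (r.factorial : ℝ)
      = Real.Gamma (αn + k + 1) / (αn * k.factorial) := by
  intro k
  induction k with
  | zero =>
      simp [Real.Gamma_add_one hαn.ne']
      field_simp
  | succ k ih =>
      rw [Finset.sum_range_succ, ih]
      have h1 : αn + ((k + 1 : ℕ) : ℝ) = (αn + k) + 1 := by push_cast; ring
      rw [h1, Real.Gamma_add_one (by positivity : (0:ℝ) < αn + k + 1).ne']
      have hf : ((k+1).factorial : ℝ) = (k+1) * k.factorial := by
        rw [Nat.factorial_succ]; push_cast; ring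
      rw [hf]
      have hk : (0:ℝ) < (k.factorial : ℝ) := by positivity
      field_simp
      ring

lemma aux17' (αn : ℝ) (hαn : 0 < αn) (k : ℕ) :
    ∑ r ∈ Finset.range (k + 1),
      (k.choose r : ℝ) * Real.Gamma ((k : ℝ) + 1 - r) * Real.Gamma (αn + r)
      = Real.Gamma (αn + k + 1) / αn := by
  have step : ∀ r ∈ Finset.range (k + 1),
      (k.choose r : ℝ) * Real.Gamma ((k : ℝ) + 1 - r) * Real.Gamma (αn + r)
        = (k.factorial : ℝ) * (Real.Gamma (αn + r) / (r.factorial : ℝ)) := by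
    intro r hr
    have hr' : r ≤ k := Nat.lt_succ_iff.mp (Finset.mem_range.mp hr)
    have h1 : (k : ℝ) + 1 - r = ((k - r : ℕ) : ℝ) + 1 := by
      push_cast [Nat.cast_sub hr']; ring
    rw [h1, Real.Gamma_nat_eq_factorial]
    have h2 : (k.choose r : ℝ) * ((k - r).factorial : ℝ) * (r.factorial : ℝ)
        = (k.factorial : ℝ) := by
      have h := congrArg (Nat.cast : ℕ → ℝ) (Nat.choose_mul_factorial_mul_factorial hr')
      push_cast at h
      linarith [h]
    have hrf : (0:ℝ) < (r.factorial : ℝ) := by positivity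
    field_simp
    nlinarith [h2, Real.Gamma_pos_of_pos (show (0:ℝ) < αn + r by positivity)]
  rw [Finset.sum_congr rfl step, ← Finset.mul_sum, aux17 αn hαn k]
  have hk : (0:ℝ) < (k.factorial : ℝ) := by positivity
  field_simp

/-- With `k₀ := k₁ + ⋯ + k_{n-1}`, `α = α₁ + ⋯ + αₙ > 0`, `αₙ > 0`,
`C := ∏_{i<n} Γ(αᵢ+kᵢ)/Γ(αᵢ)` and `b_k := (Γ(α)/Γ(α+k₀+k))·(Γ(αₙ+k)/Γ(αₙ))·C`,
the recursion
`b_{k+1} = αₙ · ∑_{r=0}^k (k choose r) · b_r · Γ(k+1-r)Γ(k₀+α+r)/Γ(α+k₀+k+1)`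
holds for all `k ≥ 0`. (Here `m = n - 1` indexes the first `n-1` coordinates.) -/
theorem stmt17 (m : ℕ) (ks : Fin m → ℕ) (as : Fin m → ℝ) (has : ∀ i, 0 < as i)
    (αn : ℝ) (hαn : 0 < αn)
    (α : ℝ) (hα : α = (∑ i, as i) + αn)
    (k₀ : ℕ) (hk₀ : k₀ = ∑ i, ks i)
    (C : ℝ) (hC : C = ∏ i, Real.Gamma (as i + ks i) / Real.Gamma (as i))
    (b : ℕ → ℝ)
    (hb : ∀ k : ℕ, b k = Real.Gamma α / Real.Gamma (α + k₀ + k) *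
      (Real.Gamma (αn + k) / Real.Gamma αn) * C) :
    ∀ k : ℕ, b (k + 1) = αn * ∑ r ∈ Finset.range (k + 1),
      (k.choose r : ℝ) * b r *
        (Real.Gamma ((k : ℝ) + 1 - r) * Real.Gamma ((k₀ : ℝ) + α + r) /
          Real.Gamma (α + k₀ + k + 1)) := by
  have hαpos : 0 < α := by
    rw [hα]
    have : 0 ≤ ∑ i, as i := Finset.sum_nonneg fun i _ => (has i).le
    linarith
  intro k
  have step : ∀ r ∈ Finset.range (k + 1),
      (k.choose r : ℝ) * b r *
        (Real.Gamma ((k : ℝ) + 1 - r) * Real.Gamma ((k₀ : ℝ) + α + r) /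
          Real.Gamma (α + k₀ + k + 1))
      = (Real.Gamma α * C / (Real.Gamma αn * Real.Gamma (α + k₀ + k + 1))) *
          ((k.choose r : ℝ) * Real.Gamma ((k : ℝ) + 1 - r) * Real.Gamma (αn + r)) := by
    intro r _
    rw [hb r]
    have harg : (k₀ : ℝ) + α + r = α + k₀ + r := by ring
    rw [harg]
    have hG : (0:ℝ) < Real.Gamma (α + k₀ + r) :=
      Real.Gamma_pos_of_pos (by positivity)
    field_simp
  rw [Finset.sum_congr rfl step, ← Finset.mul_sum, aux17' αn hαn k, hb (k + 1)]
  have h1 : α + (k₀ : ℝ) + ((k + 1 : ℕ) : ℝ) = α + k₀ + k + 1 := by push_cast; ring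
  have h2 : αn + ((k + 1 : ℕ) : ℝ) = αn + k + 1 := by push_cast; ring
  rw [h1, h2]
  field_simp
end
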